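/- arXiv:1901.02363 — 7 statements merged into one kernel-verified Lean document; each statement's English description precedes it below -/
import Mathlib

section
/- Let C > 0 and let s : ℝ → ℝ be nonincreasing (antitone) and concave on the interval [0, C]. Then the function f defined by f(x) = x·s(x) is concave on [0, C]. -/
/-- If `s` is nonincreasing and concave on `[0, C]` (with `C > 0`), then
`f(x) = x * s(x)` is concave on `[0, C]`. -/
theorem stmt_0 (C : ℝ) (hC : 0 < C) (s : ℝ → ℝ)
    (hs_anti : AntitoneOn s (Set.Icc 0 C))
    (hs_conc : ConcaveOn ℝ (Set.Icc 0 C) s) :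
    ConcaveOn ℝ (Set.Icc 0 C) (fun x => x * s x) := by
  refine ⟨convex_Icc 0 C, ?_⟩
  intro x hx y hy a b ha hb hab
  have hz := (convex_Icc 0 C) hx hy ha hb hab
  have hc := hs_conc.2 hx hy ha hb hab
  simp only [smul_eq_mul] at *
  have hz0 : 0 ≤ a * x + b * y := hz.1
  have key : x * s x + y * s y ≤ x * s y + y * s x := by
    rcases le_total x y with h | h
    · nlinarith [hs_anti hx hy h]
    · nlinarith [hs_anti hy hx h]
  have h2 : (a*x+b*y) * (a * s x + b * s y) ≤ (a*x+b*y) * s (a*x + b*y) :=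
    mul_le_mul_of_nonneg_left hc hz0
  have hk := mul_le_mul_of_nonneg_left key (mul_nonneg ha hb)
  have hb' : b = 1 - a := by linarith
  subst hb'
  nlinarith [hk, h2]
end

section
/- Let N ∈ ℝ^n. Then the following are equivalent: (1) there exist y ∈ ℝ^n and vectors u_1, …, u_K with u_k ∈ Δ_k for each k, ∑_{k=1}^K u_k = N, and each u_k maximizing v ↦ ⟨ρ_k + y, v⟩ over Δ_k; (2) N belongs to the Minkowski sum Δ_1 + ⋯ + Δ_K. -/
open Finset

/-- Weight of a walk given edge costs. -/
def wtAux {n : ℕ} (c : Fin n → Fin n → ℝ) : List (Fin n) → ℝ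
  | [] => 0
  | [_] => 0
  | i :: j :: l => c i j + wtAux c (j :: l)

lemma wtAux_cons_cons {n : ℕ} (c : Fin n → Fin n → ℝ) (i j : Fin n) (l : List (Fin n)) :
    wtAux c (i :: j :: l) = c i j + wtAux c (j :: l) := rfl

lemma wtAux_append {n : ℕ} (c : Fin n → Fin n → ℝ) (x : Fin n) :
    ∀ (l₁ l₂ : List (Fin n)),
      wtAux c (l₁ ++ x :: l₂) = wtAux c (l₁ ++ [x]) + wtAux c (x :: l₂)
  | [], l₂ => by simp [wtAux]
  | [a], l₂ => by simp [wtAux, wtAux_cons_cons]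
  | a :: b :: l₁, l₂ => by
    have ih := wtAux_append c x (b :: l₁) l₂
    simp only [List.cons_append, wtAux_cons_cons] at *
    rw [ih]; ring

lemma wtAux_eq_sum {n : ℕ} (c : Fin n → Fin n → ℝ) (d : Fin n) :
    ∀ (l : List (Fin n)),
      wtAux c l = ∑ t ∈ Finset.range (l.length - 1), c (l.getD t d) (l.getD (t + 1) d)
  | [] => by simp [wtAux]
  | [a] => by simp [wtAux]
  | a :: b :: l => by
    have ih := wtAux_eq_sum c d (b :: l)
    rw [wtAux_cons_cons, ih]
    simp only [List.length_cons, Nat.add_sub_cancel, Finset.sum_range_succ',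
      List.getD_cons_succ, List.getD_cons_zero]
    ring

lemma exists_potential {n : ℕ} (E : Fin n → Fin n → Prop) (c : Fin n → Fin n → ℝ)
    (hcyc : ∀ (i : Fin n) (l : List (Fin n)), List.Chain' E (i :: (l ++ [i])) →
      wtAux c (i :: (l ++ [i])) ≤ 0) :
    ∃ y : Fin n → ℝ, ∀ i j, E i j → c i j + y j ≤ y i := by
  classical
  -- finset of valid nodup paths starting at i
  let P : Fin n → Finset {l : List (Fin n) // l.Nodup} := fun i =>
    Finset.univ.filter (fun l => List.Chain' E l.1 ∧ l.1.head? = some i)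
  have hPne : ∀ i, (P i).Nonempty := fun i =>
    ⟨⟨[i], List.nodup_singleton i⟩, by simp only [P, Finset.mem_filter, Finset.mem_univ, true_and]; exact ⟨List.isChain_singleton i, rfl⟩⟩
  refine ⟨fun i => (P i).sup' (hPne i) (fun l => wtAux c l.1), ?_⟩
  intro i j hij
  obtain ⟨l, hl, hleq⟩ := Finset.exists_mem_eq_sup' (hPne j) (fun l => wtAux c l.1)
  simp only [P, Finset.mem_filter, Finset.mem_univ, true_and] at hl
  obtain ⟨hchain, hhead⟩ := hl
  -- l.1 = j :: tail
  obtain ⟨l', hl'⟩ : ∃ l', l.1 = j :: l' := by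
    cases h : l.1 with
    | nil => rw [h] at hhead; simp at hhead
    | cons a l' => rw [h] at hhead; simp at hhead; exact ⟨l', by rw [hhead]⟩
  have hchain' : List.Chain' E (i :: l.1) := by
    rw [hl']; exact List.isChain_cons.mpr ⟨fun h hh => by simp at hh; rwa [hh] at hij, by rwa [← hl']⟩
  have hwt : wtAux c (i :: l.1) = c i j + wtAux c l.1 := by
    rw [hl']; rfl
  show c i j + (P j).sup' (hPne j) (fun l => wtAux c l.1) ≤ (P i).sup' (hPne i) (fun l => wtAux c l.1)
  rw [hleq]
  by_cases hmem : i ∈ l.1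
  · -- split l.1 = a ++ i :: b
    obtain ⟨a, b, hab⟩ := List.append_of_mem hmem
    have hsplit : i :: l.1 = (i :: a) ++ i :: b := by rw [hab]; simp
    have hwt2 : wtAux c (i :: l.1) = wtAux c ((i :: a) ++ [i]) + wtAux c (i :: b) := by
      rw [hsplit, wtAux_append]
    have hch2 : List.Chain' E ((i :: a) ++ i :: b) := by rwa [← hsplit]
    simp only [List.Chain'] at hch2; rw [List.isChain_append] at hch2
    obtain ⟨hc1, hc2, hc3⟩ := hch2
    have hclosed : wtAux c ((i :: a) ++ [i]) ≤ 0 := by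
      have : List.Chain' E ((i :: a) ++ [i]) := by
        simp only [List.Chain']; rw [List.isChain_append]
        exact ⟨hc1, List.isChain_singleton i, fun x hx y hy => by
          simp at hy; exact hy ▸ hc3 x hx i (by simp)⟩
      have := hcyc i a (by simpa using this)
      simpa using this
    have hnodup : (i :: b).Nodup := by
      have : (i :: b).Sublist l.1 := by
        rw [hab]; exact (List.sublist_append_right a (i :: b))
      exact l.2.sublist this
    have hmemP : (⟨i :: b, hnodup⟩ : {l : List (Fin n) // l.Nodup}) ∈ P i := by
      simp only [P, Finset.mem_filter, Finset.mem_univ, true_and]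
      exact ⟨hc2, by simp⟩
    have hle : wtAux c (i :: b) ≤ (P i).sup' (hPne i) (fun l => wtAux c l.1) :=
      Finset.le_sup' (f := fun l => wtAux c l.1) hmemP
    calc c i j + wtAux c l.1 = wtAux c (i :: l.1) := hwt.symm
      _ = wtAux c ((i :: a) ++ [i]) + wtAux c (i :: b) := hwt2
      _ ≤ 0 + wtAux c (i :: b) := by linarith
      _ ≤ (P i).sup' (hPne i) (fun l => wtAux c l.1) := by simpa using hle
  · have hnodup : (i :: l.1).Nodup := List.nodup_cons.mpr ⟨hmem, l.2⟩
    have hmemP : (⟨i :: l.1, hnodup⟩ : {l : List (Fin n) // l.Nodup}) ∈ P i := by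
      simp only [P, Finset.mem_filter, Finset.mem_univ, true_and]
      exact ⟨hchain', by simp⟩
    have hle : wtAux c (i :: l.1) ≤ (P i).sup' (hPne i) (fun l => wtAux c l.1) :=
      Finset.le_sup' (f := fun l => wtAux c l.1) hmemP
    rw [← hwt]; exact hle

lemma local_to_global {n : ℕ} (Jk : Set (Fin n)) (Rk : ℕ) (c : Fin n → ℝ)
    (u v : Fin n → ℝ)
    (hu : (∀ i, u i ∈ Set.Icc (0 : ℝ) 1) ∧ (∑ i, u i) = (Rk : ℝ) ∧ ∀ i ∈ Jk, u i = 0)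
    (hv : (∀ i, v i ∈ Set.Icc (0 : ℝ) 1) ∧ (∑ i, v i) = (Rk : ℝ) ∧ ∀ i ∈ Jk, v i = 0)
    (hloc : ∀ i j, 0 < u i → u j < 1 → j ∉ Jk → c j ≤ c i) :
    ∑ i, c i * v i ≤ ∑ i, c i * u i := by
  classical
  set d : Fin n → ℝ := fun i => v i - u i with hd
  have hdsum : ∑ i, d i = 0 := by
    simp only [hd, Finset.sum_sub_distrib, hu.2.1, hv.2.1, sub_self]
  set P : Finset (Fin n) := Finset.univ.filter (fun i => 0 < d i) with hP
  rcases P.eq_empty_or_nonempty with hPe | hPne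
  · -- all d i ≤ 0, sum zero ⇒ all zero
    have hle : ∀ i ∈ Finset.univ, d i ≤ 0 := by
      intro i _
      by_contra h
      exact (Finset.eq_empty_iff_forall_notMem.mp hPe i) (by simp [hP, lt_of_not_ge h])
    have hz : ∀ i ∈ Finset.univ, d i = 0 :=
      (Finset.sum_eq_zero_iff_of_nonpos hle).mp hdsum
    have : ∀ i, v i = u i := fun i => by
      have := hz i (Finset.mem_univ i); simpa [hd, sub_eq_zero] using this
    simp [this]
  · set t : ℝ := P.sup' hPne c with ht
    have key : ∀ i, c i * d i ≤ t * d i := by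
      intro i
      rcases lt_trichotomy (d i) 0 with hneg | hzero | hpos
      · -- d i < 0 : u i > 0, and c i ≥ c p for all p ∈ P hence c i ≥ t
        have hui : 0 < u i := by
          have := (hv.1 i).1
          simp only [hd] at hneg; linarith
        have hct : t ≤ c i := by
          apply Finset.sup'_le
          intro p hp
          have hdp : 0 < d p := by simpa [hP] using hp
          have hvp : 0 < v p := by
            have := (hu.1 p).1; simp only [hd] at hdp; linarith
          have hup : u p < 1 := by
            have := (hv.1 p).2; simp only [hd] at hdp; linarith
          have hpJ : p ∉ Jk := fun hmem => by
            have := hv.2.2 p hmem; linarith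
          exact hloc i p hui hup hpJ
        nlinarith
      · simp [hzero]
      · -- d i > 0 : i ∈ P so c i ≤ t
        have hct : c i ≤ t := Finset.le_sup' c (by simp [hP, hpos])
        nlinarith
    have h1 : ∑ i, c i * d i ≤ ∑ i, t * d i := Finset.sum_le_sum fun i _ => key i
    have h2 : ∑ i, t * d i = 0 := by rw [← Finset.mul_sum, hdsum, mul_zero]
    have h3 : ∑ i, c i * d i = ∑ i, c i * v i - ∑ i, c i * u i := by
      simp [hd, mul_sub, Finset.sum_sub_distrib]
    linarith

lemma cycle_nonpos {n K : ℕ} (R : Fin K → ℕ) (J : Fin K → Set (Fin n))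
    (ρ : Fin K → Fin n → ℝ) (N : Fin n → ℝ) (us : Fin K → Fin n → ℝ)
    (hmem : ∀ k, (∀ i, us k i ∈ Set.Icc (0 : ℝ) 1) ∧ (∑ i, us k i) = (R k : ℝ) ∧
      ∀ i ∈ J k, us k i = 0)
    (hsum : ∑ k, us k = N)
    (hopt : ∀ u' : Fin K → Fin n → ℝ,
      (∀ k, (∀ i, u' k i ∈ Set.Icc (0 : ℝ) 1) ∧ (∑ i, u' k i) = (R k : ℝ) ∧
        ∀ i ∈ J k, u' k i = 0) → (∑ k, u' k = N) →
      ∑ k, ∑ i, ρ k i * u' k i ≤ ∑ k, ∑ i, ρ k i * us k i)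
    (m : ℕ) (w : ℕ → Fin n) (κ : ℕ → Fin K)
    (hw : w m = w 0)
    (hmov : ∀ t < m, 0 < us (κ t) (w t) ∧ us (κ t) (w (t + 1)) < 1 ∧ w (t + 1) ∉ J (κ t)) :
    ∑ t ∈ Finset.range m, (ρ (κ t) (w (t + 1)) - ρ (κ t) (w t)) ≤ 0 := by
  classical
  rcases Nat.eq_zero_or_pos m with hm | hm
  · simp [hm]
  have hKne : Nonempty (Fin K) := ⟨κ 0⟩
  have hnne : Nonempty (Fin n) := ⟨w 0⟩
  set net : Fin K → Fin n → ℝ := fun k i =>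
    ∑ t ∈ Finset.range m,
      ((if κ t = k ∧ w (t + 1) = i then (1 : ℝ) else 0) -
       (if κ t = k ∧ w t = i then (1 : ℝ) else 0)) with hnet
  -- (1) row sums
  have hrow : ∀ k, ∑ i, net k i = 0 := by
    intro k
    rw [Finset.sum_comm (s := Finset.univ)]
    · apply Finset.sum_eq_zero
      intro t _
      rw [Finset.sum_sub_distrib]
      have e1 : ∑ i, (if κ t = k ∧ w (t + 1) = i then (1 : ℝ) else 0)
          = if κ t = k then 1 else 0 := by
        by_cases h : κ t = k <;> simp [h]
      have e2 : ∑ i, (if κ t = k ∧ w t = i then (1 : ℝ) else 0)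
          = if κ t = k then 1 else 0 := by
        by_cases h : κ t = k <;> simp [h]
      rw [e1, e2, sub_self]
  -- (2) column sums
  have hcol : ∀ i, ∑ k, net k i = 0 := by
    intro i
    rw [Finset.sum_comm (s := Finset.univ)]
    · have e : ∀ t, ∑ k, ((if κ t = k ∧ w (t + 1) = i then (1 : ℝ) else 0) -
          (if κ t = k ∧ w t = i then (1 : ℝ) else 0))
          = (if w (t + 1) = i then (1 : ℝ) else 0) - (if w t = i then (1 : ℝ) else 0) := by
        intro t
        rw [Finset.sum_sub_distrib]
        have e1 : ∑ k, (if κ t = k ∧ w (t + 1) = i then (1 : ℝ) else 0)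
            = if w (t + 1) = i then (1 : ℝ) else 0 := by
          by_cases h : w (t + 1) = i <;> simp [h, and_comm]
        have e2 : ∑ k, (if κ t = k ∧ w t = i then (1 : ℝ) else 0)
            = if w t = i then (1 : ℝ) else 0 := by
          by_cases h : w t = i <;> simp [h, and_comm]
        rw [e1, e2]
      calc ∑ t ∈ Finset.range m, ∑ k, ((if κ t = k ∧ w (t + 1) = i then (1 : ℝ) else 0) -
              (if κ t = k ∧ w t = i then (1 : ℝ) else 0))
          = ∑ t ∈ Finset.range m, ((if w (t + 1) = i then (1 : ℝ) else 0) -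
              (if w t = i then (1 : ℝ) else 0)) := by
            exact Finset.sum_congr rfl fun t _ => e t
        _ = (if w m = i then (1 : ℝ) else 0) - (if w 0 = i then (1 : ℝ) else 0) := by
            exact Finset.sum_range_sub (fun t => if w t = i then (1 : ℝ) else 0) m
        _ = 0 := by rw [hw, sub_self]
  -- (3) vanishing on J
  have hJ : ∀ k, ∀ i ∈ J k, net k i = 0 := by
    intro k i hi
    apply Finset.sum_eq_zero
    intro t ht
    rw [Finset.mem_range] at ht
    obtain ⟨h1, h2, h3⟩ := hmov t ht
    have e1 : ¬(κ t = k ∧ w (t + 1) = i) := by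
      rintro ⟨hk, hwi⟩; rw [hk, hwi] at h3; exact h3 hi
    have e2 : ¬(κ t = k ∧ w t = i) := by
      rintro ⟨hk, hwi⟩
      have := (hmem k).2.2 i hi
      rw [hk, hwi] at h1; linarith
    simp [e1, e2]
  -- (4) positivity witnesses
  have hposw : ∀ k i, 0 < net k i → us k i < 1 := by
    intro k i h
    by_contra hc
    push_neg at hc
    have : net k i ≤ 0 := by
      apply Finset.sum_nonpos
      intro t ht
      rw [Finset.mem_range] at ht
      have e1 : ¬(κ t = k ∧ w (t + 1) = i) := by
        rintro ⟨hk, hwi⟩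
        have := (hmov t ht).2.1
        rw [hk, hwi] at this; linarith
      simp only [e1, if_false, zero_sub, neg_nonpos]
      positivity
    linarith
  have hnegw : ∀ k i, net k i < 0 → 0 < us k i := by
    intro k i h
    by_contra hc
    push_neg at hc
    have husz : us k i = 0 := le_antisymm hc ((hmem k).1 i).1
    have : 0 ≤ net k i := by
      apply Finset.sum_nonneg
      intro t ht
      rw [Finset.mem_range] at ht
      have e2 : ¬(κ t = k ∧ w t = i) := by
        rintro ⟨hk, hwi⟩
        have := (hmov t ht).1
        rw [hk, hwi, husz] at this; linarith
      simp only [e2, if_false, sub_zero]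
      positivity
    linarith
  -- choose epsilon
  set f : Fin K × Fin n → ℝ := fun p =>
    if 0 < net p.1 p.2 then (1 - us p.1 p.2) / net p.1 p.2
    else if net p.1 p.2 < 0 then us p.1 p.2 / (-net p.1 p.2) else 1 with hf
  have hfpos : ∀ p, 0 < f p := by
    rintro ⟨k, i⟩
    simp only [hf]
    split_ifs with h1 h2
    · exact div_pos (by linarith [hposw k i h1]) h1
    · exact div_pos (hnegw k i h2) (by linarith)
    · norm_num
  have hune : (Finset.univ : Finset (Fin K × Fin n)).Nonempty := Finset.univ_nonempty
  set ε : ℝ := Finset.univ.inf' hune f with hε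
  have hεpos : 0 < ε := by
    rw [hε]
    apply (Finset.lt_inf'_iff hune).mpr
    intro p _
    exact hfpos p
  have hεle : ∀ k i, ε ≤ f (k, i) := fun k i =>
    Finset.inf'_le f (Finset.mem_univ (k, i))
  -- perturbed point
  set u' : Fin K → Fin n → ℝ := fun k i => us k i + ε * net k i with hu'
  have hu'mem : ∀ k, (∀ i, u' k i ∈ Set.Icc (0 : ℝ) 1) ∧ (∑ i, u' k i) = (R k : ℝ) ∧
      ∀ i ∈ J k, u' k i = 0 := by
    intro k
    refine ⟨fun i => ?_, ?_, fun i hi => ?_⟩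
    · constructor
      · rcases lt_trichotomy (net k i) 0 with hneg | hz | hpos
        · have hle := hεle k i
          simp only [hf, if_neg (by linarith : ¬ 0 < net k i), if_pos hneg] at hle
          have : ε * (-net k i) ≤ us k i := by
            rw [le_div_iff₀ (by linarith : 0 < -net k i)] at hle
            linarith
          simp only [hu']; nlinarith
        · simp [hu', hz, ((hmem k).1 i).1]
        · have : 0 ≤ ε * net k i := by positivity
          have := ((hmem k).1 i).1
          simp only [hu']; linarith
      · rcases lt_trichotomy (net k i) 0 with hneg | hz | hpos
        · have h1 := ((hmem k).1 i).2
          have : ε * net k i ≤ 0 := mul_nonpos_of_nonneg_of_nonpos (le_of_lt hεpos) (le_of_lt hneg)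
          simp only [hu']; linarith
        · simp [hu', hz, ((hmem k).1 i).2]
        · have hle := hεle k i
          simp only [hf, if_pos hpos] at hle
          have : ε * net k i ≤ 1 - us k i := by
            rw [le_div_iff₀ hpos] at hle
            linarith
          simp only [hu']; linarith
    · simp only [hu']
      rw [Finset.sum_add_distrib, (hmem k).2.1, ← Finset.mul_sum, hrow k, mul_zero, add_zero]
    · simp only [hu']
      rw [(hmem k).2.2 i hi, hJ k i hi, mul_zero, add_zero]
  have hu'sum : ∑ k, u' k = N := by
    funext i
    rw [← hsum]
    simp only [Finset.sum_apply, hu']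
    rw [Finset.sum_add_distrib, ← Finset.mul_sum, hcol i, mul_zero, add_zero]
  have hineq := hopt u' hu'mem hu'sum
  -- compute the objective difference
  have hdiff : ∑ k, ∑ i, ρ k i * u' k i - ∑ k, ∑ i, ρ k i * us k i
      = ε * ∑ t ∈ Finset.range m, (ρ (κ t) (w (t + 1)) - ρ (κ t) (w t)) := by
    have e1 : ∀ k, ∑ i, ρ k i * u' k i - ∑ i, ρ k i * us k i = ε * ∑ i, ρ k i * net k i := by
      intro k
      simp only [hu', mul_add]
      rw [Finset.sum_add_distrib, Finset.mul_sum]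
      have hcomm : ∀ i, ρ k i * (ε * net k i) = ε * (ρ k i * net k i) := fun i => by ring
      simp only [hcomm]
      ring
    have e2 : ∑ k, ∑ i, ρ k i * u' k i - ∑ k, ∑ i, ρ k i * us k i
        = ∑ k, (∑ i, ρ k i * u' k i - ∑ i, ρ k i * us k i) := by
      rw [Finset.sum_sub_distrib]
    rw [e2]
    have e3 : ∑ k, (∑ i, ρ k i * u' k i - ∑ i, ρ k i * us k i)
        = ε * ∑ k, ∑ i, ρ k i * net k i := by
      rw [Finset.mul_sum]
      exact Finset.sum_congr rfl fun k _ => e1 k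
    rw [e3]
    congr 1
    calc ∑ k, ∑ i, ρ k i * net k i
        = ∑ k, ∑ i, ∑ t ∈ Finset.range m, ρ k i *
            ((if κ t = k ∧ w (t + 1) = i then (1 : ℝ) else 0) -
             (if κ t = k ∧ w t = i then (1 : ℝ) else 0)) := by
          simp only [hnet, Finset.mul_sum]
      _ = ∑ k, ∑ t ∈ Finset.range m, ∑ i, ρ k i *
            ((if κ t = k ∧ w (t + 1) = i then (1 : ℝ) else 0) -
             (if κ t = k ∧ w t = i then (1 : ℝ) else 0)) :=
          Finset.sum_congr rfl fun k _ => Finset.sum_comm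
      _ = ∑ t ∈ Finset.range m, ∑ k, ∑ i, ρ k i *
            ((if κ t = k ∧ w (t + 1) = i then (1 : ℝ) else 0) -
             (if κ t = k ∧ w t = i then (1 : ℝ) else 0)) := Finset.sum_comm
      _ = ∑ t ∈ Finset.range m, (ρ (κ t) (w (t + 1)) - ρ (κ t) (w t)) := by
          apply Finset.sum_congr rfl
          intro t _
          have e1 : ∀ k : Fin K, ∑ i, ρ k i * (if κ t = k ∧ w (t + 1) = i then (1 : ℝ) else 0)
              = if κ t = k then ρ k (w (t + 1)) else 0 := by
            intro k
            by_cases h : κ t = k <;>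
              simp [h, mul_ite, Finset.sum_ite_eq, Finset.sum_ite_eq']
          have e2 : ∀ k : Fin K, ∑ i, ρ k i * (if κ t = k ∧ w t = i then (1 : ℝ) else 0)
              = if κ t = k then ρ k (w t) else 0 := by
            intro k
            by_cases h : κ t = k <;>
              simp [h, mul_ite, Finset.sum_ite_eq, Finset.sum_ite_eq']
          have e3 : ∀ k : Fin K, ∑ i, ρ k i *
              ((if κ t = k ∧ w (t + 1) = i then (1 : ℝ) else 0) -
               (if κ t = k ∧ w t = i then (1 : ℝ) else 0))
              = (if κ t = k then ρ k (w (t + 1)) else 0) -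
                (if κ t = k then ρ k (w t) else 0) := by
            intro k
            simp only [mul_sub]
            rw [Finset.sum_sub_distrib, e1 k, e2 k]
          simp only [e3]
          rw [Finset.sum_sub_distrib]
          simp [Finset.sum_ite_eq, Finset.sum_ite_eq']
  have : ε * ∑ t ∈ Finset.range m, (ρ (κ t) (w (t + 1)) - ρ (κ t) (w t)) ≤ 0 := by
    rw [← hdiff]; linarith
  nlinarith [hεpos]

/-- A real vector `N` can be written as a sum of optimal responses `uₖ ∈ Δₖ`
to some common price vector `y` if and only if `N` lies in the Minkowski sum
`Δ₁ + ⋯ + Δ_K`. -/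
theorem stmt_6 (n K : ℕ) (R : Fin K → ℕ) (hR : ∀ k, R k ≤ n)
    (J : Fin K → Set (Fin n)) (ρ : Fin K → Fin n → ℝ)
    (Δ : Fin K → Set (Fin n → ℝ))
    (hΔ : ∀ k, Δ k = {u : Fin n → ℝ |
      (∀ i, u i ∈ Set.Icc (0 : ℝ) 1) ∧ (∑ i, u i) = (R k : ℝ) ∧ ∀ i ∈ J k, u i = 0})
    (N : Fin n → ℝ) :
    (∃ (y : Fin n → ℝ) (u : Fin K → Fin n → ℝ),
        (∀ k, u k ∈ Δ k ∧ ∀ v ∈ Δ k,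
          ∑ i, (ρ k i + y i) * v i ≤ ∑ i, (ρ k i + y i) * u k i)
        ∧ (∑ k, u k) = N)
    ↔ (∃ u : Fin K → Fin n → ℝ, (∀ k, u k ∈ Δ k) ∧ (∑ k, u k) = N) := by
  classical
  constructor
  · rintro ⟨y, u, h, hs⟩
    exact ⟨u, fun k => (h k).1, hs⟩
  rintro ⟨u₀, hu₀, hu₀s⟩
  -- the feasible set
  set S : Set (Fin K → Fin n → ℝ) := {u | (∀ k, (∀ i, u k i ∈ Set.Icc (0 : ℝ) 1) ∧
    (∑ i, u k i) = (R k : ℝ) ∧ ∀ i ∈ J k, u k i = 0) ∧ (∑ k, u k) = N} with hS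
  have hu₀S : u₀ ∈ S := by
    refine ⟨fun k => ?_, hu₀s⟩
    have := hu₀ k; rw [hΔ k] at this; exact this
  -- S is compact
  have hDcomp : ∀ k : Fin K, IsCompact {x : Fin n → ℝ | (∀ i, x i ∈ Set.Icc (0 : ℝ) 1) ∧
      (∑ i, x i) = (R k : ℝ) ∧ ∀ i ∈ J k, x i = 0} := by
    intro k
    have hbox : IsCompact (Set.univ.pi fun _ : Fin n => Set.Icc (0 : ℝ) 1) :=
      isCompact_univ_pi fun _ => isCompact_Icc
    have hcl : IsClosed {x : Fin n → ℝ | (∑ i, x i) = (R k : ℝ) ∧ ∀ i ∈ J k, x i = 0} := by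
      apply IsClosed.inter
      · exact isClosed_eq (continuous_finset_sum _ fun i _ => continuous_apply i)
          continuous_const
      · show IsClosed {x : Fin n → ℝ | ∀ i ∈ J k, x i = 0}
        have : {x : Fin n → ℝ | ∀ i ∈ J k, x i = 0} = ⋂ i, {x | i ∈ J k → x i = 0} := by
          ext x; simp [Set.mem_iInter]
        rw [this]
        apply isClosed_iInter
        intro i
        by_cases hi : i ∈ J k
        · have : {x : Fin n → ℝ | i ∈ J k → x i = 0} = {x | x i = 0} := by
            ext x; simp [hi]
          rw [this]
          exact isClosed_eq (continuous_apply i) continuous_const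
        · have : {x : Fin n → ℝ | i ∈ J k → x i = 0} = Set.univ := by
            ext x; simp [hi]
          rw [this]; exact isClosed_univ
    have heq : {x : Fin n → ℝ | (∀ i, x i ∈ Set.Icc (0 : ℝ) 1) ∧
        (∑ i, x i) = (R k : ℝ) ∧ ∀ i ∈ J k, x i = 0}
        = (Set.univ.pi fun _ : Fin n => Set.Icc (0 : ℝ) 1) ∩
          {x | (∑ i, x i) = (R k : ℝ) ∧ ∀ i ∈ J k, x i = 0} := by
      ext x
      constructor
      · rintro ⟨h1, h2⟩; exact ⟨fun i _ => h1 i, h2⟩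
      · rintro ⟨h1, h2⟩; exact ⟨fun i => h1 i (Set.mem_univ i), h2⟩
    rw [heq]
    exact hbox.inter_right hcl
  have hScomp : IsCompact S := by
    have hbig : IsCompact (Set.univ.pi fun k : Fin K =>
        {x : Fin n → ℝ | (∀ i, x i ∈ Set.Icc (0 : ℝ) 1) ∧
          (∑ i, x i) = (R k : ℝ) ∧ ∀ i ∈ J k, x i = 0}) :=
      isCompact_univ_pi fun k => hDcomp k
    have hT : IsClosed {u : Fin K → Fin n → ℝ | (∑ k, u k) = N} :=
      isClosed_eq (continuous_finset_sum _ fun k _ => continuous_apply k) continuous_const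
    have heq : S = (Set.univ.pi fun k : Fin K =>
        {x : Fin n → ℝ | (∀ i, x i ∈ Set.Icc (0 : ℝ) 1) ∧
          (∑ i, x i) = (R k : ℝ) ∧ ∀ i ∈ J k, x i = 0}) ∩
        {u : Fin K → Fin n → ℝ | (∑ k, u k) = N} := by
      ext u
      constructor
      · rintro ⟨h1, h2⟩; exact ⟨fun k _ => h1 k, h2⟩
      · rintro ⟨h1, h2⟩; exact ⟨fun k => h1 k (Set.mem_univ k), h2⟩
    rw [heq]
    exact hbig.inter_right hT
  -- maximize the objective over S
  have hFcont : Continuous fun u : Fin K → Fin n → ℝ => ∑ k, ∑ i, ρ k i * u k i :=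
    continuous_finset_sum _ fun k _ => continuous_finset_sum _ fun i _ =>
      continuous_const.mul ((continuous_apply i).comp (continuous_apply k))
  obtain ⟨us, husS, husmax⟩ := hScomp.exists_isMaxOn ⟨u₀, hu₀S⟩ hFcont.continuousOn
  obtain ⟨hmem, hsum⟩ := husS
  have hopt : ∀ u' : Fin K → Fin n → ℝ,
      (∀ k, (∀ i, u' k i ∈ Set.Icc (0 : ℝ) 1) ∧ (∑ i, u' k i) = (R k : ℝ) ∧
        ∀ i ∈ J k, u' k i = 0) → (∑ k, u' k = N) →
      ∑ k, ∑ i, ρ k i * u' k i ≤ ∑ k, ∑ i, ρ k i * us k i := by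
    intro u' h1 h2
    exact isMaxOn_iff.mp husmax u' ⟨h1, h2⟩
  -- edge structure
  set movable : Fin K → Fin n → Fin n → Prop := fun k i j =>
    0 < us k i ∧ us k j < 1 ∧ j ∉ J k with hmovable
  set Ms : Fin n → Fin n → Finset (Fin K) := fun i j =>
    Finset.univ.filter (fun k => movable k i j) with hMs
  set E : Fin n → Fin n → Prop := fun i j => (Ms i j).Nonempty with hE
  set c : Fin n → Fin n → ℝ := fun i j =>
    if h : (Ms i j).Nonempty then (Ms i j).sup' h (fun k => ρ k j - ρ k i) else 0 with hc
  have hub : ∀ k i j, movable k i j → ρ k j - ρ k i ≤ c i j := by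
    intro k i j hm
    have hk : k ∈ Ms i j := by
      simp only [hMs, Finset.mem_filter, Finset.mem_univ, true_and]; exact hm
    have hne : (Ms i j).Nonempty := ⟨k, hk⟩
    rw [hc]
    simp only [dif_pos hne]
    exact Finset.le_sup' (f := fun k => ρ k j - ρ k i) hk
  have hwitc : ∀ i j, E i j → ∃ k, movable k i j ∧ c i j = ρ k j - ρ k i := by
    intro i j hne
    obtain ⟨k, hk, hkeq⟩ := Finset.exists_mem_eq_sup' hne (fun k => ρ k j - ρ k i)
    refine ⟨k, ?_, ?_⟩
    · simpa [hMs] using hk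
    · rw [hc]; simp only [dif_pos (show (Ms i j).Nonempty from hne)]; exact hkeq
  -- no positive cycles
  have hcyc : ∀ (i : Fin n) (l : List (Fin n)), List.Chain' E (i :: (l ++ [i])) →
      wtAux c (i :: (l ++ [i])) ≤ 0 := by
    intro i l hchain
    set L : List (Fin n) := i :: (l ++ [i]) with hL
    have hLlen : L.length = l.length + 2 := by simp [hL]
    set m : ℕ := l.length + 1 with hm
    set w : ℕ → Fin n := fun t => L.getD t i with hwdef
    have hw0 : w 0 = i := by simp [hwdef, hL]
    have hwm : w m = i := by
      have : L = (i :: l) ++ [i] := by simp [hL]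
      rw [hwdef]
      simp only [this]
      rw [List.getD_append_right _ _ _ _ (by simp [hm])]
      simp [hm]
    have hedge : ∀ t, t < m → E (w t) (w (t + 1)) := by
      intro t ht
      have h1 : t < L.length - 1 := by omega
      have := List.isChain_iff_getElem.mp hchain t (by omega)
      have e1 : w t = L.get ⟨t, by omega⟩ := by
        rw [hwdef]; exact List.getD_eq_getElem L i (by omega)
      have e2 : w (t + 1) = L.get ⟨t + 1, by omega⟩ := by
        rw [hwdef]; exact List.getD_eq_getElem L i (by omega)
      rw [e1, e2]
      exact this
    have hwit : ∀ t, t < m → ∃ k, movable k (w t) (w (t + 1)) ∧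
        c (w t) (w (t + 1)) = ρ k (w (t + 1)) - ρ k (w t) :=
      fun t ht => hwitc _ _ (hedge t ht)
    have hm0 : 0 < m := by omega
    set κ : ℕ → Fin K := fun t => if h : t < m then (hwit t h).choose else
      (hwit 0 hm0).choose with hκ
    have hκmov : ∀ t, t < m → movable (κ t) (w t) (w (t + 1)) := by
      intro t ht
      rw [hκ]; simp only [dif_pos ht]
      exact (hwit t ht).choose_spec.1
    have hκeq : ∀ t, t < m → c (w t) (w (t + 1)) = ρ (κ t) (w (t + 1)) - ρ (κ t) (w t) := by
      intro t ht
      rw [hκ]; simp only [dif_pos ht]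
      exact (hwit t ht).choose_spec.2
    have hmov : ∀ t < m, 0 < us (κ t) (w t) ∧ us (κ t) (w (t + 1)) < 1 ∧
        w (t + 1) ∉ J (κ t) := fun t ht => hκmov t ht
    have hcn := cycle_nonpos R J ρ N us hmem hsum hopt m w κ (by rw [hwm, hw0]) hmov
    have hwteq : wtAux c L = ∑ t ∈ Finset.range m, c (w t) (w (t + 1)) := by
      have hml : L.length - 1 = m := by rw [hLlen]; omega
      rw [wtAux_eq_sum c i L, hml]
    have : wtAux c L = ∑ t ∈ Finset.range m,
        (ρ (κ t) (w (t + 1)) - ρ (κ t) (w t)) := by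
      rw [hwteq]
      exact Finset.sum_congr rfl fun t ht => hκeq t (Finset.mem_range.mp ht)
    rw [← hL] at *
    rw [this]
    exact hcn
  -- obtain the price vector
  obtain ⟨y, hy⟩ := exists_potential E c hcyc
  refine ⟨y, us, fun k => ⟨?_, ?_⟩, hsum⟩
  · rw [hΔ k]; exact hmem k
  · intro v hv
    rw [hΔ k] at hv
    apply local_to_global (J k) (R k) (fun i => ρ k i + y i) (us k) v (hmem k) hv
    intro i j hi hj hjJ
    have hmv : movable k i j := ⟨hi, hj, hjJ⟩
    have hEij : E i j := ⟨k, by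
      simp only [hMs, Finset.mem_filter, Finset.mem_univ, true_and]; exact hmv⟩
    have h1 := hub k i j hmv
    have h2 := hy i j hEij
    linarith
end

section
/- The set of integer points of the Minkowski sum of the polytopes Δ_1, …, Δ_K equals the Minkowski sum of the sets F_1, …, F_K; that is, (Δ_1 + ⋯ + Δ_K) ∩ ℤ^n = F_1 + ⋯ + F_K. In particular, for every integer vector N ∈ ℤ^n with N ∈ Δ_1 + ⋯ + Δ_K there exist u_k ∈ F_k (k = 1,…,K) with ∑_{k=1}^K u_k = N. -/
open Finset

private lemma sum_int_cast {α : Type*} (s : Finset α) (f : α → ℝ)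
    (h : ∀ a ∈ s, ∃ m : ℤ, f a = m) : ∃ m : ℤ, ∑ a ∈ s, f a = m := by
  classical
  choose g hg using h
  refine ⟨∑ a ∈ s.attach, g a a.2, ?_⟩
  rw [← Finset.sum_attach s f]
  push_cast
  exact Finset.sum_congr rfl fun a _ => hg a a.2

private lemma frac_two {m : ℕ} (f : Fin m → ℝ)
    (hb : ∀ j, 0 ≤ f j ∧ f j ≤ 1) (hs : ∃ z : ℤ, ∑ j, f j = z)
    (j0 : Fin m) (h0 : f j0 ≠ 0) (h1 : f j0 ≠ 1) :
    ∃ j, j ≠ j0 ∧ f j ≠ 0 ∧ f j ≠ 1 := by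
  classical
  by_contra hcon
  push_neg at hcon
  obtain ⟨z, hz⟩ := hs
  have h2 : ∃ z1 : ℤ, ∑ j ∈ univ.erase j0, f j = z1 := by
    apply sum_int_cast
    intro j hj
    have hjne : j ≠ j0 := (Finset.mem_erase.mp hj).1
    by_cases h : f j = 0
    · exact ⟨0, by simp [h]⟩
    · exact ⟨1, by simp [hcon j hjne h]⟩
  obtain ⟨z1, hz1⟩ := h2
  have hsplit : f j0 + ∑ j ∈ univ.erase j0, f j = ∑ j, f j :=
    Finset.add_sum_erase _ f (mem_univ j0)
  have hf0 : f j0 = ((z - z1 : ℤ) : ℝ) := by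
    push_cast
    rw [← hz, ← hsplit, hz1]
    ring
  have hlt : (0:ℝ) < ((z - z1 : ℤ):ℝ) := by
    rw [← hf0]; exact lt_of_le_of_ne (hb j0).1 (Ne.symm h0)
  have hlt1 : ((z - z1 : ℤ):ℝ) < 1 := by
    rw [← hf0]; exact lt_of_le_of_ne (hb j0).2 h1
  have e1 : (0:ℤ) < z - z1 := by exact_mod_cast hlt
  have e2 : (z - z1 : ℤ) < 1 := by exact_mod_cast hlt1
  omega

private lemma exists_walk {V : Type*} (Adj : V → V → Prop)
    (hext : ∀ x y, Adj x y → ∃ z, Adj y z ∧ z ≠ x)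
    (x0 y0 : V) (h0 : Adj x0 y0) :
    ∃ v : ℕ → V, v 0 = x0 ∧ v 1 = y0 ∧ (∀ t, Adj (v t) (v (t+1))) ∧
      ∀ t, v (t+2) ≠ v t := by
  classical
  choose f hf1 hf2 using hext
  set next : V × V → V × V :=
    fun q => (q.2, if h : Adj q.1 q.2 then f q.1 q.2 h else q.1) with hnext
  have hp : ∀ t, next^[t+1] (x0, y0) = next (next^[t] (x0, y0)) :=
    fun t => Function.iterate_succ_apply' _ _ _
  have hadjp : ∀ t, Adj (next^[t] (x0,y0)).1 (next^[t] (x0,y0)).2 := by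
    intro t
    induction t with
    | zero => simpa using h0
    | succ s ih =>
      rw [hp s]
      simp only [hnext]
      rw [dif_pos ih]
      exact hf1 _ _ ih
  refine ⟨fun t => (next^[t] (x0, y0)).1, by simp, ?_, ?_, ?_⟩
  · show (next^[1] (x0,y0)).1 = y0
    rw [hp 0]; simp [hnext]
  · intro t
    show Adj (next^[t] (x0,y0)).1 (next^[t+1] (x0,y0)).1
    have h1 : (next^[t+1] (x0,y0)).1 = (next^[t] (x0,y0)).2 := by rw [hp t]
    rw [h1]
    exact hadjp t
  · intro t
    show (next^[t+2] (x0,y0)).1 ≠ (next^[t] (x0,y0)).1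
    have h1 : (next^[t+2] (x0,y0)).1 = (next^[t+1] (x0,y0)).2 := by rw [hp (t+1)]
    have h2 : (next^[t+1] (x0,y0)).2 = f _ _ (hadjp t) := by
      rw [hp t]; simp only [hnext]; rw [dif_pos (hadjp t)]
    rw [h1, h2]
    exact hf2 _ _ (hadjp t)

private noncomputable def fracSet (K n : ℕ) (u : Fin K → Fin n → ℝ) : Finset (Fin K × Fin n) :=
  @Finset.filter _ (fun p => u p.1 p.2 ≠ 0 ∧ u p.1 p.2 ≠ 1) (Classical.decPred _) Finset.univ

private lemma mem_fracSet {K n : ℕ} {u : Fin K → Fin n → ℝ} {p : Fin K × Fin n} :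
    p ∈ fracSet K n u ↔ u p.1 p.2 ≠ 0 ∧ u p.1 p.2 ≠ 1 := by
  simp [fracSet]

private lemma exists_pert {K n : ℕ} (u : Fin K → Fin n → ℝ)
    (hb : ∀ k i, 0 ≤ u k i ∧ u k i ≤ 1)
    (hrow : ∀ k, ∃ z : ℤ, ∑ i, u k i = z)
    (hcol : ∀ i, ∃ z : ℤ, ∑ k, u k i = z)
    (hne : ∃ p : Fin K × Fin n, u p.1 p.2 ≠ 0 ∧ u p.1 p.2 ≠ 1) :
    ∃ pert : Fin K → Fin n → ℝ,
      (∀ k, ∑ i, pert k i = 0) ∧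
      (∀ i, ∑ k, pert k i = 0) ∧
      (∀ k i, pert k i ≠ 0 → u k i ≠ 0 ∧ u k i ≠ 1) ∧
      (∃ p : Fin K × Fin n, pert p.1 p.2 ≠ 0) := by
  classical
  have hrow2 : ∀ k i, u k i ≠ 0 → u k i ≠ 1 →
      ∃ i', i' ≠ i ∧ u k i' ≠ 0 ∧ u k i' ≠ 1 :=
    fun k i h0 h1 => frac_two (u k) (fun j => hb k j) (hrow k) i h0 h1
  have hcol2 : ∀ k i, u k i ≠ 0 → u k i ≠ 1 →
      ∃ k', k' ≠ k ∧ u k' i ≠ 0 ∧ u k' i ≠ 1 :=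
    fun k i h0 h1 => frac_two (fun k' => u k' i) (fun j => hb j i) (hcol i) k h0 h1
  set Adj : (Fin K ⊕ Fin n) → (Fin K ⊕ Fin n) → Prop := fun x y =>
    (∃ k i, (u k i ≠ 0 ∧ u k i ≠ 1) ∧ x = Sum.inl k ∧ y = Sum.inr i) ∨
    (∃ k i, (u k i ≠ 0 ∧ u k i ≠ 1) ∧ x = Sum.inr i ∧ y = Sum.inl k) with hAdjdef
  have hext : ∀ x y, Adj x y → ∃ z, Adj y z ∧ z ≠ x := by
    rintro x y (⟨k, i, hf, rfl, rfl⟩ | ⟨k, i, hf, rfl, rfl⟩)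
    · obtain ⟨k', hk', hf'⟩ := hcol2 k i hf.1 hf.2
      exact ⟨Sum.inl k', Or.inr ⟨k', i, hf', rfl, rfl⟩, by simp [hk']⟩
    · obtain ⟨i', hi', hf'⟩ := hrow2 k i hf.1 hf.2
      exact ⟨Sum.inr i', Or.inl ⟨k, i', hf', rfl, rfl⟩, by simp [hi']⟩
  obtain ⟨p0, hp0⟩ := hne
  obtain ⟨v, hv0, hv1, hadj, hnb⟩ := exists_walk Adj hext (Sum.inl p0.1) (Sum.inr p0.2)
    (Or.inl ⟨p0.1, p0.2, hp0, rfl, rfl⟩)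
  have hAdjne : ∀ {x y}, Adj x y → x ≠ y := by
    rintro x y (⟨k, i, _, rfl, rfl⟩ | ⟨k, i, _, rfl, rfl⟩) <;> simp
  have hpig : ∃ b, ∃ a, a < b ∧ v a = v b := by
    obtain ⟨s, t, hst, heq⟩ := Fintype.exists_ne_map_eq_of_card_lt
      (fun x : Fin (Fintype.card (Fin K ⊕ Fin n) + 1) => v x) (by simp)
    have hstv : (s : ℕ) ≠ (t : ℕ) := fun h => hst (Fin.ext h)
    rcases lt_or_gt_of_ne hstv with h | h
    · exact ⟨t, s, h, heq⟩
    · exact ⟨s, t, h, heq.symm⟩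
  set b := Nat.find hpig with hbdef
  obtain ⟨a, hab, hvab⟩ := Nat.find_spec hpig
  have hdist : ∀ s t, s < t → t < b → v s ≠ v t := by
    intro s t hst htb heq
    exact Nat.find_min hpig htb ⟨s, hst, heq⟩
  have hb2 : a + 1 < b := by
    rcases Nat.lt_or_ge (a + 1) b with h | h
    · exact h
    · have hba : b = a + 1 := le_antisymm h hab
      exact absurd (hba ▸ hvab) (hAdjne (hadj a))
  set L := b - a with hL
  have haL : a + L = b := by omega
  set c : ℕ → Fin K → Fin n → ℝ := fun j k i =>
    (if v (a+j) = Sum.inl k ∧ v (a+j+1) = Sum.inr i then (1:ℝ) else 0)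
    - (if v (a+j) = Sum.inr i ∧ v (a+j+1) = Sum.inl k then (1:ℝ) else 0) with hcdef
  set pert : Fin K → Fin n → ℝ := fun k i => ∑ j ∈ range L, c j k i with hpertdef
  have hcrow : ∀ j k, ∑ i, c j k i =
      (if v (a+j) = Sum.inl k then (1:ℝ) else 0)
        - (if v (a+j+1) = Sum.inl k then (1:ℝ) else 0) := by
    intro j k
    rcases hadj (a+j) with ⟨k0, i0, hf, h1, h2⟩ | ⟨k0, i0, hf, h1, h2⟩
    · simp only [hcdef, h1, h2]
      by_cases hk : k0 = k <;> simp [hk, Finset.sum_ite_eq]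
    · simp only [hcdef, h1, h2]
      by_cases hk : k0 = k <;> simp [hk, Finset.sum_ite_eq]
  have hccol : ∀ j i, ∑ k, c j k i =
      (if v (a+j+1) = Sum.inr i then (1:ℝ) else 0)
        - (if v (a+j) = Sum.inr i then (1:ℝ) else 0) := by
    intro j i
    rcases hadj (a+j) with ⟨k0, i0, hf, h1, h2⟩ | ⟨k0, i0, hf, h1, h2⟩
    · simp only [hcdef, h1, h2]
      by_cases hi : i0 = i <;> simp [hi, Finset.sum_ite_eq]
    · simp only [hcdef, h1, h2]
      by_cases hi : i0 = i <;> simp [hi, Finset.sum_ite_eq]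
  have hprow : ∀ k, ∑ i, pert k i = 0 := by
    intro k
    have : ∑ i, pert k i = ∑ j ∈ range L, ∑ i, c j k i := by
      rw [hpertdef, Finset.sum_comm]
    rw [this]
    have h2 : ∀ j ∈ range L, ∑ i, c j k i =
        (fun t => if v (a+t) = Sum.inl k then (1:ℝ) else 0) j
          - (fun t => if v (a+t) = Sum.inl k then (1:ℝ) else 0) (j+1) := by
      intro j _
      exact hcrow j k
    rw [Finset.sum_congr rfl h2, Finset.sum_range_sub']
    simp only [Nat.add_zero, haL, hvab]
    ring
  have hpcol : ∀ i, ∑ k, pert k i = 0 := by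
    intro i
    have : ∑ k, pert k i = ∑ j ∈ range L, ∑ k, c j k i := by
      rw [hpertdef, Finset.sum_comm]
    rw [this]
    have h2 : ∀ j ∈ range L, ∑ k, c j k i =
        (fun t => if v (a+t) = Sum.inr i then (1:ℝ) else 0) (j+1)
          - (fun t => if v (a+t) = Sum.inr i then (1:ℝ) else 0) j := by
      intro j _
      exact hccol j i
    rw [Finset.sum_congr rfl h2, Finset.sum_range_sub (fun t => if v (a+t) = Sum.inr i then (1:ℝ) else 0) L]
    simp only [Nat.add_zero, haL, hvab]
    ring
  have hedge : ∀ j k i, c j k i ≠ 0 →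
      (u k i ≠ 0 ∧ u k i ≠ 1) ∧
      ((v (a+j) = Sum.inl k ∧ v (a+j+1) = Sum.inr i) ∨
       (v (a+j) = Sum.inr i ∧ v (a+j+1) = Sum.inl k)) := by
    intro j k i hc0
    have hcase : (v (a+j) = Sum.inl k ∧ v (a+j+1) = Sum.inr i) ∨
        (v (a+j) = Sum.inr i ∧ v (a+j+1) = Sum.inl k) := by
      by_contra hcon
      push_neg at hcon
      apply hc0
      simp only [hcdef]
      rw [if_neg, if_neg]
      · ring
      · intro h; exact hcon.2 h.1 h.2
      · intro h; exact hcon.1 h.1 h.2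
    refine ⟨?_, hcase⟩
    rcases hcase with ⟨h1, h2⟩ | ⟨h1, h2⟩ <;>
      rcases hadj (a+j) with ⟨k0, i0, hf, e1, e2⟩ | ⟨k0, i0, hf, e1, e2⟩ <;>
      rw [h1] at e1 <;> rw [h2] at e2 <;> cases e1 <;> cases e2 <;> exact hf
  have hsupp : ∀ k i, pert k i ≠ 0 → u k i ≠ 0 ∧ u k i ≠ 1 := by
    intro k i hp
    have h3 : ∃ j ∈ range L, c j k i ≠ 0 := by
      by_contra hcon
      push_neg at hcon
      exact hp (Finset.sum_eq_zero hcon)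
    obtain ⟨j, _, hj⟩ := h3
    exact (hedge j k i hj).1
  have hLpos : 0 < L := by omega
  have hpne : ∃ p : Fin K × Fin n, pert p.1 p.2 ≠ 0 := by
    rcases hadj a with ⟨k0, i0, hf, e1, e2⟩ | ⟨k0, i0, hf, e1, e2⟩
    · refine ⟨(k0, i0), ?_⟩
      have hc0 : c 0 k0 i0 = 1 := by
        simp only [hcdef, Nat.add_zero]
        rw [if_pos ⟨e1, e2⟩, if_neg]
        · ring
        · rintro ⟨h, -⟩; rw [e1] at h; exact Sum.inl_ne_inr h
      have hrest : ∀ j ∈ range L, j ≠ 0 → c j k0 i0 = 0 := by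
        intro j hjr hj0
        by_contra hcne
        obtain ⟨-, hcase⟩ := hedge j k0 i0 hcne
        have hjL : j < L := mem_range.mp hjr
        rcases hcase with ⟨h1, h2⟩ | ⟨h1, h2⟩
        · exact hdist a (a+j) (by omega) (by omega) (e1.trans h1.symm)
        · by_cases hj1 : j = 1
          · subst hj1
            exact hnb a (show v (a+2) = v a by rw [← e1] at h2; exact h2)
          · exact hdist (a+1) (a+j) (by omega) (by omega) (e2.trans h1.symm)
      have hp1 : pert k0 i0 = 1 := by
        show (∑ j ∈ range L, c j k0 i0) = 1
        rw [Finset.sum_eq_single_of_mem 0 (mem_range.mpr hLpos) hrest]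
        exact hc0
      rw [hp1]; norm_num
    · refine ⟨(k0, i0), ?_⟩
      have hc0 : c 0 k0 i0 = -1 := by
        simp only [hcdef, Nat.add_zero]
        rw [if_neg, if_pos ⟨e1, e2⟩]
        · ring
        · rintro ⟨h, -⟩; rw [e1] at h; exact Sum.inr_ne_inl h
      have hrest : ∀ j ∈ range L, j ≠ 0 → c j k0 i0 = 0 := by
        intro j hjr hj0
        by_contra hcne
        obtain ⟨-, hcase⟩ := hedge j k0 i0 hcne
        have hjL : j < L := mem_range.mp hjr
        rcases hcase with ⟨h1, h2⟩ | ⟨h1, h2⟩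
        · by_cases hj1 : j = 1
          · subst hj1
            exact hnb a (show v (a+2) = v a by rw [← e1] at h2; exact h2)
          · exact hdist (a+1) (a+j) (by omega) (by omega) (e2.trans h1.symm)
        · exact hdist a (a+j) (by omega) (by omega) (e1.trans h1.symm)
      have hp1 : pert k0 i0 = -1 := by
        show (∑ j ∈ range L, c j k0 i0) = -1
        rw [Finset.sum_eq_single_of_mem 0 (mem_range.mpr hLpos) hrest]
        exact hc0
      rw [hp1]; norm_num
  exact ⟨pert, hprow, hpcol, hsupp, hpne⟩

private lemma step {K n : ℕ} (u : Fin K → Fin n → ℝ)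
    (hb : ∀ k i, 0 ≤ u k i ∧ u k i ≤ 1)
    (hrow : ∀ k, ∃ z : ℤ, ∑ i, u k i = z)
    (hcol : ∀ i, ∃ z : ℤ, ∑ k, u k i = z)
    (hne : ∃ p : Fin K × Fin n, u p.1 p.2 ≠ 0 ∧ u p.1 p.2 ≠ 1) :
    ∃ w : Fin K → Fin n → ℝ,
      (∀ k i, 0 ≤ w k i ∧ w k i ≤ 1) ∧
      (∀ k i, u k i = 0 → w k i = 0) ∧
      (∀ k, ∑ i, w k i = ∑ i, u k i) ∧
      (∀ i, ∑ k, w k i = ∑ k, u k i) ∧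
      (fracSet K n w).card < (fracSet K n u).card := by
  classical
  obtain ⟨pert, hprow, hpcol, hsupp, hpne⟩ := exists_pert u hb hrow hcol hne
  set T : Finset (Fin K × Fin n) := univ.filter (fun p => pert p.1 p.2 ≠ 0) with hTdef
  have hTne : T.Nonempty := by
    obtain ⟨p, hp⟩ := hpne
    exact ⟨p, Finset.mem_filter.mpr ⟨mem_univ _, hp⟩⟩
  set εf : Fin K × Fin n → ℝ := fun p =>
    if 0 < pert p.1 p.2 then (1 - u p.1 p.2) / pert p.1 p.2
    else u p.1 p.2 / (-pert p.1 p.2) with hεfdef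
  set ε := T.inf' hTne εf with hεdef
  have hmemT : ∀ p : Fin K × Fin n, pert p.1 p.2 ≠ 0 → p ∈ T :=
    fun p hp => Finset.mem_filter.mpr ⟨mem_univ _, hp⟩
  have hεfpos : ∀ p ∈ T, 0 < εf p := by
    intro p hp
    have hpne' : pert p.1 p.2 ≠ 0 := (mem_filter.mp hp).2
    have hfrac := hsupp p.1 p.2 hpne'
    have h0 : 0 < u p.1 p.2 := lt_of_le_of_ne (hb _ _).1 (Ne.symm hfrac.1)
    have h1 : u p.1 p.2 < 1 := lt_of_le_of_ne (hb _ _).2 hfrac.2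
    rcases lt_or_gt_of_ne hpne' with hneg | hpos
    · simp only [hεfdef]
      rw [if_neg (not_lt.mpr hneg.le)]
      exact div_pos h0 (by linarith)
    · simp only [hεfdef]
      rw [if_pos hpos]
      exact div_pos (by linarith) hpos
  have hεpos : 0 < ε := by
    rw [hεdef, Finset.lt_inf'_iff]
    exact hεfpos
  have hεle : ∀ p ∈ T, ε ≤ εf p := fun p hp => Finset.inf'_le _ hp
  set w : Fin K → Fin n → ℝ := fun k i => u k i + ε * pert k i with hwdef
  have hwbounds : ∀ k i, 0 ≤ w k i ∧ w k i ≤ 1 := by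
    intro k i
    simp only [hwdef]
    rcases lt_trichotomy (pert k i) 0 with hneg | h0 | hpos
    · have hmem : (k, i) ∈ T := hmemT (k, i) hneg.ne
      have hle := hεle (k, i) hmem
      simp only [hεfdef] at hle
      rw [if_neg (not_lt.mpr hneg.le)] at hle
      have h2 : ε * (-pert k i) ≤ u k i := by
        rw [le_div_iff₀ (by linarith)] at hle
        linarith
      have h3 : ε * pert k i ≤ 0 := le_of_lt (mul_neg_of_pos_of_neg hεpos hneg)
      exact ⟨by linarith, by linarith [(hb k i).2]⟩
    · rw [h0, mul_zero, add_zero]; exact hb k i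
    · have hmem : (k, i) ∈ T := hmemT (k, i) hpos.ne'
      have hle := hεle (k, i) hmem
      simp only [hεfdef] at hle
      rw [if_pos hpos, le_div_iff₀ hpos] at hle
      have h3 : 0 ≤ ε * pert k i := le_of_lt (mul_pos hεpos hpos)
      exact ⟨by linarith [(hb k i).1], by linarith⟩
  have hwzero : ∀ k i, u k i = 0 → w k i = 0 := by
    intro k i h0
    have hp0 : pert k i = 0 := by
      by_contra h
      exact (hsupp k i h).1 h0
    simp [hwdef, hp0, h0]
  refine ⟨w, hwbounds, hwzero, ?_, ?_, ?_⟩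
  · intro k
    simp only [hwdef]
    rw [Finset.sum_add_distrib, ← Finset.mul_sum, hprow k, mul_zero, add_zero]
  · intro i
    simp only [hwdef]
    rw [Finset.sum_add_distrib, ← Finset.mul_sum, hpcol i, mul_zero, add_zero]
  · have hsub : fracSet K n w ⊆ fracSet K n u := by
      intro p hp
      rw [mem_fracSet] at hp ⊢
      by_cases hp0 : pert p.1 p.2 = 0
      · simpa [hwdef, hp0] using hp
      · exact hsupp p.1 p.2 hp0
    obtain ⟨pm, hpT, hpmin⟩ := Finset.exists_mem_eq_inf' hTne εf
    have hpertne : pert pm.1 pm.2 ≠ 0 := (mem_filter.mp hpT).2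
    have hwp : w pm.1 pm.2 = 1 ∨ w pm.1 pm.2 = 0 := by
      rcases lt_or_gt_of_ne hpertne with hneg | hpos
      · right
        have hε2 : ε = u pm.1 pm.2 / (-pert pm.1 pm.2) := by
          rw [← hεdef] at hpmin
          rw [hpmin]
          simp only [hεfdef]
          rw [if_neg (not_lt.mpr hneg.le)]
        simp only [hwdef]
        rw [hε2]
        have hd : u pm.1 pm.2 / -pert pm.1 pm.2 * pert pm.1 pm.2 = -u pm.1 pm.2 := by
          rw [div_mul_eq_mul_div, div_neg, mul_div_assoc, div_self hpertne, mul_one]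
        rw [hd]; ring
      · left
        have hε2 : ε = (1 - u pm.1 pm.2) / pert pm.1 pm.2 := by
          rw [← hεdef] at hpmin
          rw [hpmin]
          simp only [hεfdef]
          rw [if_pos hpos]
        simp only [hwdef]
        rw [hε2]
        rw [div_mul_cancel₀ _ hpertne]; ring
    have hpnotw : pm ∉ fracSet K n w := by
      rw [mem_fracSet]
      rcases hwp with h | h <;> simp [h]
    have hpinu : pm ∈ fracSet K n u := mem_fracSet.mpr (hsupp _ _ hpertne)
    exact Finset.card_lt_card ((Finset.ssubset_iff_of_subset hsub).mpr ⟨pm, hpinu, hpnotw⟩)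

private lemma round_aux (n K : ℕ) : ∀ (m : ℕ) (u : Fin K → Fin n → ℝ),
    (fracSet K n u).card ≤ m →
    (∀ k i, 0 ≤ u k i ∧ u k i ≤ 1) →
    (∀ k, ∃ z : ℤ, ∑ i, u k i = z) →
    (∀ i, ∃ z : ℤ, ∑ k, u k i = z) →
    ∃ v : Fin K → Fin n → ℝ,
      (∀ k i, v k i = 0 ∨ v k i = 1) ∧
      (∀ k i, u k i = 0 → v k i = 0) ∧
      (∀ k, ∑ i, v k i = ∑ i, u k i) ∧
      (∀ i, ∑ k, v k i = ∑ k, u k i) := by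
  intro m
  induction m with
  | zero =>
    intro u hcard hb hr hc
    refine ⟨u, ?_, fun k i h => h, fun k => rfl, fun i => rfl⟩
    intro k i
    by_contra hcon
    push_neg at hcon
    have : (k, i) ∈ fracSet K n u := mem_fracSet.mpr hcon
    have := Finset.card_pos.mpr ⟨(k, i), this⟩
    omega
  | succ m ih =>
    intro u hcard hb hr hc
    by_cases hne : ∃ p : Fin K × Fin n, u p.1 p.2 ≠ 0 ∧ u p.1 p.2 ≠ 1
    · obtain ⟨w, hwb, hwz, hwr, hwc, hwcard⟩ := step u hb hr hc hne
      obtain ⟨v, hv01, hv0, hvr, hvc⟩ := ih w (by omega) hwb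
        (fun k => by rw [hwr k]; exact hr k)
        (fun i => by rw [hwc i]; exact hc i)
      refine ⟨v, hv01, ?_, ?_, ?_⟩
      · intro k i h0
        exact hv0 k i (hwz k i h0)
      · intro k; rw [hvr k, hwr k]
      · intro i; rw [hvc i, hwc i]
    · push_neg at hne
      refine ⟨u, ?_, fun k i h => h, fun k => rfl, fun i => rfl⟩
      intro k i
      by_cases h : u k i = 0
      · exact Or.inl h
      · exact Or.inr (hne (k, i) h)

/-- The integer points of the Minkowski sum `Δ₁ + ⋯ + Δ_K` are exactly the
Minkowski sum `F₁ + ⋯ + F_K`; in particular every integer vector in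
`Δ₁ + ⋯ + Δ_K` decomposes as a sum of elements of the `Fₖ`. -/
theorem stmt_7 (n K : ℕ) (R : Fin K → ℕ) (hR : ∀ k, R k ≤ n)
    (J : Fin K → Set (Fin n))
    (F Δ : Fin K → Set (Fin n → ℝ))
    (hF : ∀ k, F k = {u : Fin n → ℝ |
      (∀ i, u i = 0 ∨ u i = 1) ∧ (∑ i, u i) = (R k : ℝ) ∧ ∀ i ∈ J k, u i = 0})
    (hΔ : ∀ k, Δ k = {u : Fin n → ℝ |
      (∀ i, u i ∈ Set.Icc (0 : ℝ) 1) ∧ (∑ i, u i) = (R k : ℝ) ∧ ∀ i ∈ J k, u i = 0}) :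
    ({N : Fin n → ℝ |
        (∃ u : Fin K → Fin n → ℝ, (∀ k, u k ∈ Δ k) ∧ (∑ k, u k) = N)
        ∧ ∀ i, ∃ m : ℤ, N i = (m : ℝ)}
      = {N : Fin n → ℝ |
        ∃ u : Fin K → Fin n → ℝ, (∀ k, u k ∈ F k) ∧ (∑ k, u k) = N})
    ∧ ∀ N : Fin n → ℝ, (∀ i, ∃ m : ℤ, N i = (m : ℝ)) →
        (∃ u : Fin K → Fin n → ℝ, (∀ k, u k ∈ Δ k) ∧ (∑ k, u k) = N) →
        ∃ u : Fin K → Fin n → ℝ, (∀ k, u k ∈ F k) ∧ (∑ k, u k) = N := by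
  have main : ∀ N : Fin n → ℝ, (∀ i, ∃ m : ℤ, N i = (m : ℝ)) →
      (∃ u : Fin K → Fin n → ℝ, (∀ k, u k ∈ Δ k) ∧ (∑ k, u k) = N) →
      ∃ u : Fin K → Fin n → ℝ, (∀ k, u k ∈ F k) ∧ (∑ k, u k) = N := by
    rintro N hNint ⟨u, hu, hsum⟩
    have hu' : ∀ k, (∀ i, u k i ∈ Set.Icc (0:ℝ) 1) ∧
        (∑ i, u k i) = (R k : ℝ) ∧ ∀ i ∈ J k, u k i = 0 := by
      intro k
      have := hu k
      rwa [hΔ k] at this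
    have hbu : ∀ k i, 0 ≤ u k i ∧ u k i ≤ 1 := by
      intro k i
      exact Set.mem_Icc.mp ((hu' k).1 i)
    have hrowu : ∀ k, ∃ z : ℤ, ∑ i, u k i = z :=
      fun k => ⟨R k, by rw [(hu' k).2.1]; push_cast; ring⟩
    have hcolu : ∀ i, ∃ z : ℤ, ∑ k, u k i = z := by
      intro i
      obtain ⟨m, hm⟩ := hNint i
      refine ⟨m, ?_⟩
      rw [← hm, ← hsum]
      simp [Finset.sum_apply]
    obtain ⟨v, hv01, hv0, hvrow, hvcol⟩ :=
      round_aux n K (fracSet K n u).card u le_rfl hbu hrowu hcolu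
    refine ⟨v, ?_, ?_⟩
    · intro k
      rw [hF k]
      refine ⟨fun i => hv01 k i, ?_, ?_⟩
      · rw [hvrow k]
        exact (hu' k).2.1
      · intro i hi
        exact hv0 k i ((hu' k).2.2 i hi)
    · funext i
      rw [Finset.sum_apply, hvcol i, ← hsum]
      simp [Finset.sum_apply]
  constructor
  · ext N
    simp only [Set.mem_setOf_eq]
    constructor
    · rintro ⟨hmem, hint⟩
      exact main N hint hmem
    · rintro ⟨u, hu, hsum⟩
      have hu' : ∀ k, (∀ i, u k i = 0 ∨ u k i = 1) ∧
          (∑ i, u k i) = (R k : ℝ) ∧ ∀ i ∈ J k, u k i = 0 := by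
        intro k
        have := hu k
        rwa [hF k] at this
      constructor
      · refine ⟨u, fun k => ?_, hsum⟩
        rw [hΔ k]
        refine ⟨fun i => ?_, (hu' k).2⟩
        rcases (hu' k).1 i with h | h <;> rw [h] <;> simp [Set.mem_Icc]
      · intro i
        have hint : ∀ k ∈ (univ : Finset (Fin K)), ∃ m : ℤ, u k i = m := by
          intro k _
          rcases (hu' k).1 i with h | h
          · exact ⟨0, by simp [h]⟩
          · exact ⟨1, by simp [h]⟩
        obtain ⟨m, hm⟩ := sum_int_cast univ (fun k => u k i) hint
        refine ⟨m, ?_⟩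
        rw [← hsum]
        simpa [Finset.sum_apply] using hm
  · exact main
end

section
/- A vector N ∈ ℤ^n is feasible — i.e., there exist y ∈ ℝ^n and vectors u_1, …, u_K with each u_k ∈ F_k maximizing v ↦ ⟨ρ_k + y, v⟩ over F_k and ∑_{k=1}^K u_k = N — if and only if N belongs to the Minkowski sum F_1 + ⋯ + F_K. -/
open Finset

section BellmanAux
open Classical in
noncomputable def bell {V : Type} [Fintype V] (Arc : V → V → Prop) (c : V → V → ℝ) : ℕ → V → ℝ
  | 0 => fun _ => 0
  | (t+1) => fun j =>
      (insert (bell Arc c t j)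
        ((Finset.univ.filter (fun i => Arc i j)).image (fun i => bell Arc c t i + c i j))).min'
        (Finset.insert_nonempty _ _)

variable {V : Type} [Fintype V] {Arc : V → V → Prop} {c : V → V → ℝ}

lemma bell_le_self (t : ℕ) (j : V) : bell Arc c (t+1) j ≤ bell Arc c t j := by
  classical
  apply Finset.min'_le
  exact Finset.mem_insert_self _ _

lemma bell_le_arc {i j : V} (t : ℕ) (h : Arc i j) :
    bell Arc c (t+1) j ≤ bell Arc c t i + c i j := by
  classical
  apply Finset.min'_le
  apply Finset.mem_insert_of_mem
  refine Finset.mem_image.2 ⟨i, ?_, rfl⟩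
  simp [h]

lemma bell_antitone {s t : ℕ} (h : s ≤ t) (j : V) : bell Arc c t j ≤ bell Arc c s j := by
  induction t with
  | zero => obtain rfl : s = 0 := by omega
            exact le_refl _
  | succ t ih =>
    rcases Nat.eq_or_lt_of_le h with rfl | h'
    · exact le_refl _
    · exact le_trans (bell_le_self t j) (ih (by omega))

lemma bell_cases (t : ℕ) (j : V) :
    bell Arc c (t+1) j = bell Arc c t j ∨
      ∃ i, Arc i j ∧ bell Arc c (t+1) j = bell Arc c t i + c i j := by
  classical
  have hmem := Finset.min'_mem
    (insert (bell Arc c t j)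
      ((Finset.univ.filter (fun i => Arc i j)).image (fun i => bell Arc c t i + c i j)))
    (Finset.insert_nonempty _ _)
  rw [Finset.mem_insert] at hmem
  rcases hmem with h | h
  · left; exact h
  · right
    rcases Finset.mem_image.1 h with ⟨i, hi, hval⟩
    exact ⟨i, (Finset.mem_filter.1 hi).2, hval.symm⟩

lemma exists_potential_s8 {V : Type} [Fintype V] (Arc : V → V → Prop) (c : V → V → ℝ)
    (hcyc : ∀ (m : ℕ) (g : ℕ → V), 0 < m →
      (∀ a, a < m → ∀ b, b < m → g a = g b → a = b) →
      (∀ t, t < m → Arc (g t) (g ((t+1) % m))) →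
      0 ≤ ∑ t ∈ Finset.range m, c (g t) (g ((t+1) % m))) :
    ∃ y : V → ℝ, ∀ i j, Arc i j → y j ≤ y i + c i j := by
  classical
  set n := Fintype.card V with hn
  refine ⟨bell Arc c n, fun i j hij => ?_⟩
  have hle := bell_le_arc (c := c) n hij
  -- it suffices that bell (n+1) j = bell n j
  have hstab : ∀ v : V, ¬ bell Arc c (n+1) v < bell Arc c n v := by
    intro v hv
    -- build the descending chain
    set D := bell Arc c with hD
    have key : ∀ s, s < n → ∀ w, D (n+1-s) w < D (n-s) w →
        ∃ i, Arc i w ∧ D (n+1-s) w = D (n-s) i + c i w ∧ D (n-s) i < D (n-s-1) i := by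
      intro s hs w hw
      have h1 : n + 1 - s = (n - s) + 1 := by omega
      have h2 : n - s = (n - s - 1) + 1 := by omega
      rw [h1] at hw
      rcases bell_cases (Arc := Arc) (c := c) (n-s) w with heq | ⟨i, hi, hval⟩
      all_goals rw [← hD] at *
      · exact absurd heq (ne_of_lt hw)
      · refine ⟨i, hi, by rw [h1]; exact hval, ?_⟩
        by_contra hcon
        push_neg at hcon
        have h3 : D (n-s) i = D (n-s-1) i :=
          le_antisymm (by rw [h2]; exact bell_le_self _ _) hcon
        have h4 : D (n-s) w ≤ D (n-s-1) i + c i w := by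
          rw [h2]; exact bell_le_arc _ hi
        rw [← h3] at h4
        rw [hval] at hw
        exact absurd (lt_of_le_of_lt h4 hw) (lt_irrefl _)
    -- the step function
    set Fstep : ℕ → V → V := fun s w =>
      if h : ∃ i, Arc i w ∧ D (n+1-s) w = D (n-s) i + c i w ∧ D (n-s) i < D (n-s-1) i
      then h.choose else w with hFstep
    set jj : ℕ → V := fun s => Nat.rec v (fun s prev => Fstep s prev) s with hjj
    have hjj0 : jj 0 = v := rfl
    have hjjsucc : ∀ s, jj (s+1) = Fstep s (jj s) := fun s => rfl
    -- invariant C1 and properties C2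
    have hC1 : ∀ s, s ≤ n → D (n+1-s) (jj s) < D (n-s) (jj s) := by
      intro s
      induction s with
      | zero => intro _; rw [hjj0]; simpa using hv
      | succ s ih =>
        intro hs
        have hs' : s < n := by omega
        have hprev := ih (by omega)
        have hex := key s hs' (jj s) hprev
        have : jj (s+1) = hex.choose := by
          rw [hjjsucc, hFstep]; simp only
          rw [dif_pos hex]
        rw [this]
        have hspec := hex.choose_spec
        have e1 : n + 1 - (s+1) = n - s := by omega
        have e2 : n - (s+1) = n - s - 1 := by omega
        rw [e1, e2]
        exact hspec.2.2
    have hC2 : ∀ s, s < n → Arc (jj (s+1)) (jj s) ∧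
        D (n+1-s) (jj s) = D (n-s) (jj (s+1)) + c (jj (s+1)) (jj s) := by
      intro s hs
      have hprev := hC1 s (by omega)
      have hex := key s hs (jj s) hprev
      have : jj (s+1) = hex.choose := by
        rw [hjjsucc, hFstep]; simp only
        rw [dif_pos hex]
      rw [this]
      exact ⟨hex.choose_spec.1, hex.choose_spec.2.1⟩
    -- pigeonhole
    have hcard : Fintype.card V < Fintype.card (Fin (n+1)) := by simp [hn]
    obtain ⟨x, y, hxy, hjxy⟩ := Fintype.exists_ne_map_eq_of_card_lt
      (fun t : Fin (n+1) => jj t.val) hcard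
    -- minimal window
    have hS : ∃ d, ∃ p q, q ≤ n ∧ p < q ∧ q - p = d ∧ jj p = jj q := by
      rcases lt_or_gt_of_ne hxy with h | h
      · exact ⟨y.val - x.val, x.val, y.val, by omega, by exact_mod_cast h, rfl, hjxy⟩
      · exact ⟨x.val - y.val, y.val, x.val, by omega, by exact_mod_cast h, rfl, hjxy.symm⟩
    set d₀ := Nat.find hS with hd₀
    obtain ⟨a, b, hbn, hab, hdab, hjab⟩ := Nat.find_spec hS
    set m := b - a with hm
    have hm0 : 0 < m := by omega
    -- the cycle
    set g : ℕ → V := fun t => jj (b - t) with hg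
    have hinj : ∀ p, p < m → ∀ q, q < m → g p = g q → p = q := by
      intro p hp q hq hpq
      by_contra hne
      -- indices b - p, b - q in [a+1, b], distinct, equal jj values
      have h1 : a + 1 ≤ b - p ∧ b - p ≤ b := by omega
      have h2 : a + 1 ≤ b - q ∧ b - q ≤ b := by omega
      rcases Nat.lt_or_ge (b - p) (b - q) with hlt | hge
      · have := Nat.find_min hS (m := (b - q) - (b - p)) (by omega)
        exact this ⟨b - p, b - q, by omega, hlt, rfl, hpq⟩
      · have hlt : b - q < b - p := by omega
        have := Nat.find_min hS (m := (b - p) - (b - q)) (by omega)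
        exact this ⟨b - q, b - p, by omega, hlt, rfl, hpq.symm⟩
    have harc : ∀ t, t < m → Arc (g t) (g ((t+1) % m)) := by
      intro t ht
      have hterm : g ((t+1) % m) = jj (b - t - 1) := by
        rcases Nat.lt_or_ge (t+1) m with h | h
        · rw [Nat.mod_eq_of_lt h]
          rfl
        · have h2 : t + 1 = m := by omega
          rw [h2, Nat.mod_self]
          show jj (b - 0) = jj (b - t - 1)
          have e3 : b - 0 = b := by omega
          have e4 : b - t - 1 = a := by omega
          rw [e3, e4]
          exact hjab.symm
      rw [hterm]
      have := (hC2 (b - t - 1) (by omega)).1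
      have e : b - t - 1 + 1 = b - t := by omega
      rw [e] at this
      exact this
    have hsum := hcyc m g hm0 hinj harc
    -- compute the sum: it telescopes and is negative
    have hterm : ∀ t, t < m →
        c (g t) (g ((t+1) % m)) =
          D (n+1-(b-t-1)) (jj (b-t-1)) - D (n-(b-t-1)) (jj (b-t)) := by
      intro t ht
      have hterm2 : g ((t+1) % m) = jj (b - t - 1) := by
        rcases Nat.lt_or_ge (t+1) m with h | h
        · rw [Nat.mod_eq_of_lt h]
          rfl
        · have h2 : t + 1 = m := by omega
          rw [h2, Nat.mod_self]
          show jj (b - 0) = jj (b - t - 1)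
          have e3 : b - 0 = b := by omega
          have e4 : b - t - 1 = a := by omega
          rw [e3, e4]
          exact hjab.symm
      have hC := (hC2 (b - t - 1) (by omega)).2
      have e : b - t - 1 + 1 = b - t := by omega
      rw [e] at hC
      rw [hterm2, hg]
      simp only
      rw [hC]
      ring
    rw [Finset.sum_congr rfl (fun t ht => hterm t (Finset.mem_range.1 ht))] at hsum
    -- reindex: t ↦ m - 1 - t, so that index becomes s = a + u
    have hre : ∑ t ∈ Finset.range m, (D (n+1-(b-t-1)) (jj (b-t-1)) - D (n-(b-t-1)) (jj (b-t)))
        = ∑ u ∈ Finset.range m, (D (n+1-(a+u)) (jj (a+u)) - D (n-(a+u)) (jj (a+u+1))) := by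
      rw [← Finset.sum_range_reflect]
      apply Finset.sum_congr rfl
      intro u hu
      rw [Finset.mem_range] at hu
      have e1 : b - (m - 1 - u) - 1 = a + u := by omega
      have e2 : b - (m - 1 - u) = a + u + 1 := by omega
      rw [e1, e2]
    rw [hre] at hsum
    -- bound each term by a telescoping difference
    set f : ℕ → ℝ := fun u => D (n+1-(a+u)) (jj (a+u)) with hf
    have hbound : ∀ u ∈ Finset.range m,
        (D (n+1-(a+u)) (jj (a+u)) - D (n-(a+u)) (jj (a+u+1))) ≤ f u - f (u+1) := by
      intro u hu
      rw [Finset.mem_range] at hu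
      have e : n + 1 - (a + (u+1)) = n - (a + u) := by omega
      simp only [hf, e]
      have e5 : a + (u+1) = a + u + 1 := by omega
      rw [e5]
    have hsum2 : (0:ℝ) ≤ ∑ u ∈ Finset.range m, (f u - f (u+1)) :=
      le_trans hsum (Finset.sum_le_sum hbound)
    rw [Finset.sum_range_sub' f m] at hsum2
    -- but f 0 - f m < 0
    have hfm : f m = D (n+1-b) (jj a) := by
      simp only [hf]
      have : a + m = b := by omega
      rw [this, ← hjab]
    have hf0 : f 0 = D (n+1-a) (jj a) := by simp [hf]
    have hstrict : f 0 < f m := by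
      rw [hf0, hfm]
      calc D (n+1-a) (jj a) < D (n-a) (jj a) := hC1 a (by omega)
        _ ≤ D (n+1-b) (jj a) := bell_antitone (by omega) _
    linarith
  have hstab' : bell Arc c (n+1) j = bell Arc c n j :=
    le_antisymm (bell_le_self n j) (not_lt.1 (hstab j))
  rw [← hstab']
  exact hle


end BellmanAux

/-- An integer vector `N` is feasible (i.e. it is the sum of optimal responses
`uₖ ∈ Fₖ` of the `K` customers to some common price vector `y`) if and only if
`N` belongs to the Minkowski sum `F₁ + ⋯ + F_K`. -/
theorem stmt_8 (n K : ℕ) (R : Fin K → ℕ) (hR : ∀ k, R k ≤ n)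
    (J : Fin K → Set (Fin n)) (ρ : Fin K → Fin n → ℝ)
    (F : Fin K → Set (Fin n → ℝ))
    (hF : ∀ k, F k = {u : Fin n → ℝ |
      (∀ i, u i = 0 ∨ u i = 1) ∧ (∑ i, u i) = (R k : ℝ) ∧ ∀ i ∈ J k, u i = 0})
    (N : Fin n → ℝ) (hNint : ∀ i, ∃ m : ℤ, N i = (m : ℝ)) :
    (∃ (y : Fin n → ℝ) (u : Fin K → Fin n → ℝ),
        (∀ k, u k ∈ F k ∧ ∀ v ∈ F k,
          ∑ i, (ρ k i + y i) * v i ≤ ∑ i, (ρ k i + y i) * u k i)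
        ∧ (∑ k, u k) = N)
    ↔ (∃ u : Fin K → Fin n → ℝ, (∀ k, u k ∈ F k) ∧ (∑ k, u k) = N) := by
  classical
  constructor
  · rintro ⟨y, u, hu, hsum⟩
    exact ⟨u, fun k => (hu k).1, hsum⟩
  rintro ⟨u0, hu0, hsum0⟩
  -- the finite nonempty set of decompositions
  set A : Set (Fin K → Fin n → ℝ) := {u | (∀ k, u k ∈ F k) ∧ ∑ k, u k = N} with hA
  have hFfin : ∀ k, (F k).Finite := by
    intro k
    have h01 : ({0, 1} : Set ℝ).Finite := (Set.finite_singleton 1).insert 0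
    refine Set.Finite.subset (Set.Finite.pi (fun _ : Fin n => h01)) ?_
    intro v hv
    rw [hF k] at hv
    intro i _
    rcases hv.1 i with h | h <;> simp [h]
  have hAfin : A.Finite := by
    refine Set.Finite.subset (Set.Finite.pi hFfin) ?_
    intro w hw k _
    exact hw.1 k
  have hAne : A.Nonempty := ⟨u0, hu0, hsum0⟩
  set Φ : (Fin K → Fin n → ℝ) → ℝ := fun w => ∑ k, ∑ i, ρ k i * w k i with hΦ
  obtain ⟨u, huA, hmax⟩ := Finset.exists_max_image hAfin.toFinset Φ
    (by rwa [Set.Finite.toFinset_nonempty])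
  rw [Set.Finite.mem_toFinset] at huA
  have hmax' : ∀ w ∈ A, Φ w ≤ Φ u := by
    intro w hw
    exact hmax w (by rwa [Set.Finite.mem_toFinset])
  -- basic facts about u
  have hu01 : ∀ k i, u k i = 0 ∨ u k i = 1 := by
    intro k i
    have := huA.1 k
    rw [hF k] at this
    exact this.1 i
  have husum : ∀ k, ∑ i, u k i = (R k : ℝ) := by
    intro k
    have := huA.1 k
    rw [hF k] at this
    exact this.2.1
  have huJ : ∀ k, ∀ i ∈ J k, u k i = 0 := by
    intro k
    have := huA.1 k
    rw [hF k] at this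
    exact this.2.2
  have huN : ∑ k, u k = N := huA.2
  -- the exchange structure
  set allowed : Fin K → Fin n → Fin n → Prop :=
    fun k i j => u k i = 1 ∧ u k j = 0 ∧ j ∉ J k with hallowed
  set AK : Fin n → Fin n → Finset (Fin K) :=
    fun i j => Finset.univ.filter (fun k => allowed k i j) with hAK
  set Arc : Fin n → Fin n → Prop := fun i j => (AK i j).Nonempty with hArc
  set c : Fin n → Fin n → ℝ := fun i j =>
    if h : (AK i j).Nonempty then (AK i j).inf' h (fun k => ρ k i - ρ k j) else 0 with hc
  have hcmin : ∀ k i j, allowed k i j → c i j ≤ ρ k i - ρ k j := by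
    intro k i j hk
    have hmem : k ∈ AK i j := Finset.mem_filter.2 ⟨Finset.mem_univ _, hk⟩
    have hne : (AK i j).Nonempty := ⟨k, hmem⟩
    rw [hc]
    simp only
    rw [dif_pos hne]
    exact Finset.inf'_le _ hmem
  have hcex : ∀ i j, Arc i j → ∃ k, allowed k i j ∧ c i j = ρ k i - ρ k j := by
    intro i j hij
    obtain ⟨k, hk, hval⟩ := Finset.exists_mem_eq_inf' hij (fun k => ρ k i - ρ k j)
    refine ⟨k, (Finset.mem_filter.1 hk).2, ?_⟩
    rw [hc]
    simp only
    rw [dif_pos hij]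
    exact hval
  -- the cycle condition
  have hcyc : ∀ (m : ℕ) (g : ℕ → Fin n), 0 < m →
      (∀ a, a < m → ∀ b, b < m → g a = g b → a = b) →
      (∀ t, t < m → Arc (g t) (g ((t+1) % m))) →
      0 ≤ ∑ t ∈ Finset.range m, c (g t) (g ((t+1) % m)) := by
    intro m g hm0 hinj harc
    have hKchoice : ∀ t, t < m → ∃ k, allowed k (g t) (g ((t+1) % m)) ∧
        c (g t) (g ((t+1) % m)) = ρ k (g t) - ρ k (g ((t+1) % m)) :=
      fun t ht => hcex _ _ (harc t ht)
    set ch : ℕ → Fin K := fun t =>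
      if h : t < m then (hKchoice t h).choose else (hKchoice 0 hm0).choose with hch
    have hchspec : ∀ t, t < m → allowed (ch t) (g t) (g ((t+1) % m)) ∧
        c (g t) (g ((t+1) % m)) = ρ (ch t) (g t) - ρ (ch t) (g ((t+1) % m)) := by
      intro t ht
      rw [hch]
      simp only
      rw [dif_pos ht]
      exact (hKchoice t ht).choose_spec
    have hmodlt : ∀ t, t < m → (t+1) % m < m := fun t _ => Nat.mod_lt _ hm0
    have hmodinj : ∀ p, p < m → ∀ q, q < m → (p+1) % m = (q+1) % m → p = q := by
      intro p hp q hq h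
      rcases Nat.lt_or_ge (p+1) m with h1 | h1 <;> rcases Nat.lt_or_ge (q+1) m with h2 | h2
      · rw [Nat.mod_eq_of_lt h1, Nat.mod_eq_of_lt h2] at h; omega
      · have hq1 : q + 1 = m := by omega
        rw [Nat.mod_eq_of_lt h1, hq1, Nat.mod_self] at h; omega
      · have hp1 : p + 1 = m := by omega
        rw [hp1, Nat.mod_self, Nat.mod_eq_of_lt h2] at h; omega
      · omega
    have hshift : ∀ w : Fin n → ℝ,
        ∑ t ∈ Finset.range m, w (g ((t+1) % m)) = ∑ t ∈ Finset.range m, w (g t) := by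
      intro w
      have hinj' : ∀ p ∈ Finset.range m, ∀ q ∈ Finset.range m,
          (p+1) % m = (q+1) % m → p = q := by
        intro p hp q hq h
        exact hmodinj p (Finset.mem_range.1 hp) q (Finset.mem_range.1 hq) h
      have himg : (Finset.range m).image (fun t => (t+1) % m) = Finset.range m := by
        apply Finset.eq_of_subset_of_card_le
        · intro x hx
          obtain ⟨t, ht, rfl⟩ := Finset.mem_image.1 hx
          exact Finset.mem_range.2 (hmodlt t (Finset.mem_range.1 ht))
        · rw [Finset.card_image_of_injOn (fun p hp q hq h =>
            hinj' p (Finset.mem_coe.1 hp) q (Finset.mem_coe.1 hq) h)]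
      conv_rhs => rw [← himg]
      rw [Finset.sum_image hinj']
    -- the exchanged decomposition
    set T : Fin K → Fin n → ℝ := fun k i =>
      ∑ t ∈ Finset.range m, (if ch t = k ∧ g ((t+1) % m) = i then (1:ℝ) else 0) with hT
    set S : Fin K → Fin n → ℝ := fun k i =>
      ∑ t ∈ Finset.range m, (if ch t = k ∧ g t = i then (1:ℝ) else 0) with hS
    set u' : Fin K → Fin n → ℝ := fun k i => u k i + T k i - S k i with hu'
    have hTval : ∀ k i, T k i =
        if (∃ t, t < m ∧ ch t = k ∧ g ((t+1) % m) = i) then 1 else 0 := by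
      intro k i
      rw [hT]
      simp only
      by_cases hex : ∃ t, t < m ∧ ch t = k ∧ g ((t+1) % m) = i
      · rw [if_pos hex]
        obtain ⟨t₀, ht₀, hch₀, hg₀⟩ := hex
        rw [Finset.sum_eq_single_of_mem t₀ (Finset.mem_range.2 ht₀)]
        · rw [if_pos ⟨hch₀, hg₀⟩]
        · intro s hs hne
          rw [if_neg]
          rintro ⟨h1, h2⟩
          have hs' := Finset.mem_range.1 hs
          apply hne
          apply hmodinj s hs' t₀ ht₀
          apply hinj _ (hmodlt s hs') _ (hmodlt t₀ ht₀)
          rw [h2, hg₀]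
      · rw [if_neg hex]
        apply Finset.sum_eq_zero
        intro s hs
        rw [if_neg]
        rintro ⟨h1, h2⟩
        exact hex ⟨s, Finset.mem_range.1 hs, h1, h2⟩
    have hSval : ∀ k i, S k i =
        if (∃ t, t < m ∧ ch t = k ∧ g t = i) then 1 else 0 := by
      intro k i
      rw [hS]
      simp only
      by_cases hex : ∃ t, t < m ∧ ch t = k ∧ g t = i
      · rw [if_pos hex]
        obtain ⟨t₀, ht₀, hch₀, hg₀⟩ := hex
        rw [Finset.sum_eq_single_of_mem t₀ (Finset.mem_range.2 ht₀)]
        · rw [if_pos ⟨hch₀, hg₀⟩]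
        · intro s hs hne
          rw [if_neg]
          rintro ⟨h1, h2⟩
          have hs' := Finset.mem_range.1 hs
          exact hne (hinj s hs' t₀ ht₀ (by rw [h2, hg₀]))
      · rw [if_neg hex]
        apply Finset.sum_eq_zero
        intro s hs
        rw [if_neg]
        rintro ⟨h1, h2⟩
        exact hex ⟨s, Finset.mem_range.1 hs, h1, h2⟩
    -- T = 1 facts
    have hTprop : ∀ k i, (∃ t, t < m ∧ ch t = k ∧ g ((t+1) % m) = i) →
        u k i = 0 ∧ i ∉ J k := by
      rintro k i ⟨t, ht, rfl, rfl⟩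
      have := (hchspec t ht).1
      exact ⟨this.2.1, this.2.2⟩
    have hSprop : ∀ k i, (∃ t, t < m ∧ ch t = k ∧ g t = i) → u k i = 1 := by
      rintro k i ⟨t, ht, rfl, rfl⟩
      exact ((hchspec t ht).1).1
    -- values of u'
    have hval01 : ∀ k i, u' k i = 0 ∨ u' k i = 1 := by
      intro k i
      rw [hu']
      simp only
      rw [hTval, hSval]
      by_cases hexT : ∃ t, t < m ∧ ch t = k ∧ g ((t+1) % m) = i <;>
        by_cases hexS : ∃ t, t < m ∧ ch t = k ∧ g t = i
      · exact absurd (hSprop k i hexS) (by rw [(hTprop k i hexT).1]; norm_num)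
      · right; rw [if_pos hexT, if_neg hexS, (hTprop k i hexT).1]; ring
      · left; rw [if_neg hexT, if_pos hexS, hSprop k i hexS]; ring
      · rw [if_neg hexT, if_neg hexS]
        rcases hu01 k i with h | h
        · left; rw [h]; ring
        · right; rw [h]; ring
    have hJ' : ∀ k, ∀ i ∈ J k, u' k i = 0 := by
      intro k i hJk
      rw [hu']
      simp only
      rw [hTval, hSval]
      have hexT : ¬ ∃ t, t < m ∧ ch t = k ∧ g ((t+1) % m) = i :=
        fun hex => (hTprop k i hex).2 hJk
      have hexS : ¬ ∃ t, t < m ∧ ch t = k ∧ g t = i := by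
        intro hex
        have := hSprop k i hex
        rw [huJ k i hJk] at this
        norm_num at this
      rw [if_neg hexT, if_neg hexS, huJ k i hJk]
      ring
    -- row sums
    have hrowT : ∀ k, ∑ i, T k i = ∑ t ∈ Finset.range m, (if ch t = k then (1:ℝ) else 0) := by
      intro k
      rw [hT]
      simp only
      rw [Finset.sum_comm]
      apply Finset.sum_congr rfl
      intro t _
      by_cases h : ch t = k <;> simp [h, ite_and, Finset.sum_ite_eq]
    have hrowS : ∀ k, ∑ i, S k i = ∑ t ∈ Finset.range m, (if ch t = k then (1:ℝ) else 0) := by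
      intro k
      rw [hS]
      simp only
      rw [Finset.sum_comm]
      apply Finset.sum_congr rfl
      intro t _
      by_cases h : ch t = k <;> simp [h, ite_and, Finset.sum_ite_eq]
    have hrow : ∀ k, ∑ i, u' k i = (R k : ℝ) := by
      intro k
      rw [hu']
      simp only
      rw [Finset.sum_sub_distrib, Finset.sum_add_distrib, hrowT, hrowS, husum k]
      ring
    -- column sums
    have hcolT : ∀ i, ∑ k, T k i =
        ∑ t ∈ Finset.range m, (if g ((t+1) % m) = i then (1:ℝ) else 0) := by
      intro i
      rw [hT]
      simp only
      rw [Finset.sum_comm]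
      apply Finset.sum_congr rfl
      intro t _
      by_cases h : g ((t+1) % m) = i <;> simp [h, ite_and, Finset.sum_ite_eq,
        and_comm (a := ch t = _)]
    have hcolS : ∀ i, ∑ k, S k i =
        ∑ t ∈ Finset.range m, (if g t = i then (1:ℝ) else 0) := by
      intro i
      rw [hS]
      simp only
      rw [Finset.sum_comm]
      apply Finset.sum_congr rfl
      intro t _
      by_cases h : g t = i <;> simp [h, ite_and, Finset.sum_ite_eq,
        and_comm (a := ch t = _)]
    have hcol : ∑ k, u' k = N := by
      funext i
      rw [Finset.sum_apply]
      have : ∀ k, u' k i = u k i + T k i - S k i := fun k => rfl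
      rw [Finset.sum_congr rfl (fun k _ => this k), Finset.sum_sub_distrib,
        Finset.sum_add_distrib, hcolT, hcolS]
      have hN : ∑ k, u k i = N i := by
        rw [← Finset.sum_apply i Finset.univ u, huN]
      rw [hN]
      have := hshift (fun x => if x = i then (1:ℝ) else 0)
      rw [this]
      ring
    have hu'A : u' ∈ A := by
      constructor
      · intro k
        rw [hF k]
        exact ⟨hval01 k, hrow k, hJ' k⟩
      · exact hcol
    -- objective comparison
    have hΦT : ∀ k, ∑ i, ρ k i * T k i =
        ∑ t ∈ Finset.range m, (if ch t = k then ρ k (g ((t+1) % m)) else 0) := by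
      intro k
      rw [hT]
      simp only
      calc ∑ i, ρ k i * (∑ t ∈ Finset.range m,
              if ch t = k ∧ g ((t+1) % m) = i then (1:ℝ) else 0)
          = ∑ i, ∑ t ∈ Finset.range m,
              (if ch t = k ∧ g ((t+1) % m) = i then ρ k i else 0) := by
            apply Finset.sum_congr rfl
            intro i _
            rw [Finset.mul_sum]
            apply Finset.sum_congr rfl
            intro t _
            rw [mul_ite, mul_one, mul_zero]
        _ = ∑ t ∈ Finset.range m, ∑ i,
              (if ch t = k ∧ g ((t+1) % m) = i then ρ k i else 0) := Finset.sum_comm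
        _ = ∑ t ∈ Finset.range m, (if ch t = k then ρ k (g ((t+1) % m)) else 0) := by
            apply Finset.sum_congr rfl
            intro t _
            by_cases h : ch t = k <;> simp [h, ite_and, Finset.sum_ite_eq]
    have hΦS : ∀ k, ∑ i, ρ k i * S k i =
        ∑ t ∈ Finset.range m, (if ch t = k then ρ k (g t) else 0) := by
      intro k
      rw [hS]
      simp only
      calc ∑ i, ρ k i * (∑ t ∈ Finset.range m,
              if ch t = k ∧ g t = i then (1:ℝ) else 0)
          = ∑ i, ∑ t ∈ Finset.range m,
              (if ch t = k ∧ g t = i then ρ k i else 0) := by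
            apply Finset.sum_congr rfl
            intro i _
            rw [Finset.mul_sum]
            apply Finset.sum_congr rfl
            intro t _
            rw [mul_ite, mul_one, mul_zero]
        _ = ∑ t ∈ Finset.range m, ∑ i,
              (if ch t = k ∧ g t = i then ρ k i else 0) := Finset.sum_comm
        _ = ∑ t ∈ Finset.range m, (if ch t = k then ρ k (g t) else 0) := by
            apply Finset.sum_congr rfl
            intro t _
            by_cases h : ch t = k <;> simp [h, ite_and, Finset.sum_ite_eq]
    have hsumT : ∑ k, ∑ i, ρ k i * T k i =
        ∑ t ∈ Finset.range m, ρ (ch t) (g ((t+1) % m)) := by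
      rw [Finset.sum_congr rfl (fun k _ => hΦT k), Finset.sum_comm]
      apply Finset.sum_congr rfl
      intro t _
      simp [Finset.sum_ite_eq]
    have hsumS : ∑ k, ∑ i, ρ k i * S k i =
        ∑ t ∈ Finset.range m, ρ (ch t) (g t) := by
      rw [Finset.sum_congr rfl (fun k _ => hΦS k), Finset.sum_comm]
      apply Finset.sum_congr rfl
      intro t _
      simp [Finset.sum_ite_eq]
    have hΦu' : Φ u' = Φ u + (∑ t ∈ Finset.range m, ρ (ch t) (g ((t+1) % m)))
        - ∑ t ∈ Finset.range m, ρ (ch t) (g t) := by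
      rw [hΦ]
      simp only
      have hterm : ∀ k i, ρ k i * u' k i =
          ρ k i * u k i + ρ k i * T k i - ρ k i * S k i := by
        intro k i
        rw [hu']
        ring
      calc ∑ k, ∑ i, ρ k i * u' k i
          = ∑ k, ((∑ i, ρ k i * u k i) + (∑ i, ρ k i * T k i) - ∑ i, ρ k i * S k i) := by
            apply Finset.sum_congr rfl
            intro k _
            rw [Finset.sum_congr rfl (fun i _ => hterm k i), Finset.sum_sub_distrib,
              Finset.sum_add_distrib]
        _ = (∑ k, ∑ i, ρ k i * u k i) + (∑ k, ∑ i, ρ k i * T k i)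
            - ∑ k, ∑ i, ρ k i * S k i := by
            rw [Finset.sum_sub_distrib, Finset.sum_add_distrib]
        _ = _ := by rw [hsumT, hsumS]
    have hle := hmax' u' hu'A
    have hfinal : ∑ t ∈ Finset.range m, c (g t) (g ((t+1) % m)) = Φ u - Φ u' := by
      rw [hΦu']
      rw [Finset.sum_congr rfl (fun t ht => (hchspec t (Finset.mem_range.1 ht)).2),
        Finset.sum_sub_distrib]
      ring
    rw [hfinal]
    linarith
  obtain ⟨y, hy⟩ := exists_potential_s8 Arc c hcyc
  refine ⟨y, u, fun k => ⟨by rw [hF k]; exact ⟨hu01 k, husum k, huJ k⟩, ?_⟩, huN⟩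
  -- optimality of u k
  intro v hv
  rw [hF k] at hv
  obtain ⟨hv01, hvsum, hvJ⟩ := hv
  set a : Fin n → ℝ := fun i => ρ k i + y i with ha
  set BA : Finset (Fin n) := Finset.univ.filter (fun i => u k i = 1 ∧ v i = 0) with hBA
  set BB : Finset (Fin n) := Finset.univ.filter (fun i => v i = 1 ∧ u k i = 0) with hBB
  have hpair : ∀ i ∈ BA, ∀ j ∈ BB, a j ≤ a i := by
    intro i hi j hj
    rw [hBA, Finset.mem_filter] at hi
    rw [hBB, Finset.mem_filter] at hj
    have hallow : allowed k i j := by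
      refine ⟨hi.2.1, hj.2.2, fun hJ => ?_⟩
      have := hvJ j hJ
      rw [this] at hj
      exact absurd hj.2.1 (by norm_num)
    have hArcij : Arc i j := ⟨k, Finset.mem_filter.2 ⟨Finset.mem_univ _, hallow⟩⟩
    have h1 := hy i j hArcij
    have h2 := hcmin k i j hallow
    rw [ha]
    simp only
    linarith
  have hptwise : ∀ i, v i - u k i =
      (if v i = 1 ∧ u k i = 0 then (1:ℝ) else 0) -
      (if u k i = 1 ∧ v i = 0 then (1:ℝ) else 0) := by
    intro i
    rcases hv01 i with h1 | h1 <;> rcases hu01 k i with h2 | h2 <;> simp [h1, h2]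
  have hcards : BB.card = BA.card := by
    have h0 : ∑ i, (v i - u k i) = 0 := by
      rw [Finset.sum_sub_distrib, hvsum, husum k]
      ring
    rw [Finset.sum_congr rfl (fun i _ => hptwise i), Finset.sum_sub_distrib] at h0
    rw [Finset.sum_boole, Finset.sum_boole] at h0
    have : (BB.card : ℝ) = BA.card := by
      rw [hBB, hBA]
      linarith
    exact_mod_cast this
  have hkey : ∑ i, a i * (v i - u k i) ≤ 0 := by
    have hrw : ∑ i, a i * (v i - u k i) = (∑ j ∈ BB, a j) - (∑ i ∈ BA, a i) := by
      have step1 : ∀ i : Fin n, a i * (v i - u k i) =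
          (if v i = 1 ∧ u k i = 0 then a i else 0) -
          (if u k i = 1 ∧ v i = 0 then a i else 0) := by
        intro i
        rw [hptwise i, mul_sub, mul_ite, mul_ite, mul_one, mul_zero]
      calc ∑ i, a i * (v i - u k i)
          = ∑ i, ((if v i = 1 ∧ u k i = 0 then a i else 0) -
              (if u k i = 1 ∧ v i = 0 then a i else 0)) :=
            Finset.sum_congr rfl (fun i _ => step1 i)
        _ = (∑ j ∈ BB, a j) - (∑ i ∈ BA, a i) := by
            rw [Finset.sum_sub_distrib, hBB, hBA, Finset.sum_filter, Finset.sum_filter]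
    rw [hrw]
    rcases Finset.eq_empty_or_nonempty BB with hBBe | hBBne
    · have hBAe : BA = ∅ := by
        rw [← Finset.card_eq_zero, ← hcards, hBBe]
        exact Finset.card_empty
      rw [hBBe, hBAe]
      simp
    · have hBAne : BA.Nonempty := by
        rw [← Finset.card_pos, ← hcards, Finset.card_pos]
        exact hBBne
      obtain ⟨i₀, hi₀, hμ⟩ := Finset.exists_mem_eq_inf' hBAne a
      have h1 : ∑ j ∈ BB, a j ≤ BB.card • (BA.inf' hBAne a) :=
        Finset.sum_le_card_nsmul _ _ _ (fun j hj => by rw [hμ]; exact hpair i₀ hi₀ j hj)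
      have h2 : BA.card • (BA.inf' hBAne a) ≤ ∑ i ∈ BA, a i :=
        Finset.card_nsmul_le_sum _ _ _ (fun i hi => Finset.inf'_le _ hi)
      rw [hcards] at h1
      linarith
  have hexp : ∑ i, a i * (v i - u k i) = (∑ i, a i * v i) - ∑ i, a i * u k i := by
    rw [← Finset.sum_sub_distrib]
    apply Finset.sum_congr rfl
    intro i _
    ring
  rw [hexp] at hkey
  rw [ha] at hkey
  simp only at hkey
  linarith
end

section
/- Let u_1*, …, u_K* with u_k* ∈ Δ_k for each k, and set N = ∑_{k=1}^K u_k*. Then the following are equivalent: (1) there exists y ∈ ℝ^n such that for each k, u_k* maximizes v ↦ ⟨ρ_k + y, v⟩ over Δ_k; (2) ∑_{k=1}^K ⟨ρ_k, u_k*⟩ = sup { ∑_{k=1}^K ⟨ρ_k, v_k⟩ : v_k ∈ Δ_k for each k and ∑_{k=1}^K v_k = N }, i.e. the u_k* realize the minimum in the infimal convolution ψ of the functions φ_k(u) = −⟨ρ_k, u⟩ + χ_{Δ_k}(u) at the point N. -/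
open Finset

private lemma dot_sub_smul {α : Type} [Fintype α] (x z y : α → ℝ) (c : ℝ) :
    ∑ i, (x i - c * z i) * y i = (∑ i, x i * y i) - c * ∑ i, z i * y i := by
  simp [sub_mul, Finset.sum_sub_distrib, Finset.mul_sum, mul_assoc]

private lemma dot_sub_smul' {α : Type} [Fintype α] (x z y : α → ℝ) (c : ℝ) :
    ∑ i, y i * (x i - c * z i) = (∑ i, y i * x i) - c * ∑ i, y i * z i := by
  rw [Finset.mul_sum, ← Finset.sum_sub_distrib]
  exact Finset.sum_congr rfl fun i _ => by ring

private lemma farkas_fin (α : Type) [Fintype α] :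
    ∀ (m : ℕ) (w : Fin m → α → ℝ) (b : α → ℝ),
    (∃ t : Fin m → ℝ, (∀ j, 0 ≤ t j) ∧ ∀ i, ∑ j, t j * w j i = b i) ∨
    (∃ v : α → ℝ, (∀ j, ∑ i, v i * w j i ≤ 0) ∧ 0 < ∑ i, v i * b i) := by
  intro m
  induction m with
  | zero =>
    intro w b
    by_cases hb : ∀ i, b i = 0
    · exact Or.inl ⟨0, fun j => le_refl _, fun i => by simp [hb i]⟩
    · refine Or.inr ⟨b, fun j => j.elim0, ?_⟩
      push_neg at hb
      obtain ⟨i0, hi0⟩ := hb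
      exact Finset.sum_pos' (fun i _ => mul_self_nonneg _)
        ⟨i0, Finset.mem_univ _, mul_self_pos.2 hi0⟩
  | succ m ih =>
    intro w b
    set wl := w (Fin.last m) with hwl
    rcases ih (fun j => w j.castSucc) b with ⟨t, ht, hsum⟩ | ⟨v, hv, hvb⟩
    · refine Or.inl ⟨Fin.snoc t 0, ?_, ?_⟩
      · intro j
        refine Fin.lastCases ?_ ?_ j <;> simp [ht]
      · intro i
        rw [Fin.sum_univ_castSucc]
        simp [hsum i]
    · rcases le_or_gt (∑ i, v i * wl i) 0 with hle | ha
      · refine Or.inr ⟨v, ?_, hvb⟩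
        intro j
        refine Fin.lastCases ?_ ?_ j
        · exact hle
        · exact fun j => hv j
      · -- project along wl
        set a := ∑ i, v i * wl i with hadef
        set w' : Fin m → α → ℝ :=
          fun j i => w j.castSucc i - ((∑ i', v i' * w j.castSucc i') / a) * wl i with hw'
        set b' : α → ℝ := fun i => b i - ((∑ i', v i' * b i') / a) * wl i with hb'
        rcases ih w' b' with ⟨t, ht, hsum⟩ | ⟨v', hv', hvb'⟩
        · -- reconstruct coefficients
          set lam : ℝ := ((∑ i, v i * b i) - ∑ j, t j * (∑ i, v i * w j.castSucc i)) / a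
            with hlam
          refine Or.inl ⟨Fin.snoc t lam, ?_, ?_⟩
          · intro j
            refine Fin.lastCases ?_ ?_ j
            · simp only [Fin.snoc_last]
              apply div_nonneg _ ha.le
              have hterm : ∑ j, t j * (∑ i, v i * w j.castSucc i) ≤ 0 :=
                Finset.sum_nonpos fun j _ => mul_nonpos_of_nonneg_of_nonpos (ht j) (hv j)
              linarith [hvb]
            · intro j; simp [ht j]
          · intro i
            rw [Fin.sum_univ_castSucc]
            simp only [Fin.snoc_castSucc, Fin.snoc_last]
            have h1 := hsum i
            have h2 : ∑ j, t j * w' j i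
                = (∑ j, t j * w j.castSucc i)
                  - (∑ j, t j * ((∑ i', v i' * w j.castSucc i') / a)) * wl i := by
              simp [hw', mul_sub, Finset.sum_sub_distrib, Finset.sum_mul, mul_assoc]
            rw [h2, hb'] at h1
            have h3 : ∑ j, t j * ((∑ i', v i' * w j.castSucc i') / a)
                = (∑ j, t j * (∑ i', v i' * w j.castSucc i')) / a := by
              rw [Finset.sum_div]
              exact Finset.sum_congr rfl fun j _ => (mul_div_assoc _ _ _).symm
            rw [h3] at h1
            rw [hlam]
            have hane : a ≠ 0 := ne_of_gt ha
            field_simp at h1 ⊢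
            linarith [h1]
        · -- reconstruct separating vector
          refine Or.inr ⟨fun i => v' i - ((∑ i', v' i' * wl i') / a) * v i, ?_, ?_⟩
          · intro j
            refine Fin.lastCases ?_ ?_ j
            · rw [dot_sub_smul]
              rw [← hadef]
              have hane : a ≠ 0 := ne_of_gt ha
              field_simp
              rw [← hwl, sub_self]
            · intro j
              rw [dot_sub_smul]
              have := hv' j
              rw [hw'] at this
              simp only [] at this
              rw [dot_sub_smul'] at this
              have hane : a ≠ 0 := ne_of_gt ha
              -- this : (∑ v' * w j.castSucc) - (vwj/a) * (∑ v' wl) ≤ 0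
              -- goal : (∑ v' * w j.castSucc) - (∑ v' wl / a) * (∑ v * w j.castSucc) ≤ 0
              have e1 : (∑ i', v i' * w j.castSucc i') / a * ∑ i, v' i * wl i
                  = (∑ i, v' i * wl i) / a * ∑ i, v i * w j.castSucc i := by
                field_simp
              calc ∑ i, v' i * w j.castSucc i - (∑ i', v' i' * wl i') / a * ∑ i, v i * w j.castSucc i
                  = ∑ i, v' i * w j.castSucc i
                    - (∑ i', v i' * w j.castSucc i') / a * ∑ i, v' i * wl i := by rw [e1]
                _ ≤ 0 := this
          · rw [dot_sub_smul]
            have := hvb'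
            rw [hb'] at this
            simp only [] at this
            rw [dot_sub_smul'] at this
            have hane : a ≠ 0 := ne_of_gt ha
            have e1 : (∑ i', v i' * b i') / a * ∑ i, v' i * wl i
                = (∑ i, v' i * wl i) / a * ∑ i, v i * b i := by
              field_simp
            calc (0:ℝ) < ∑ i, v' i * b i - (∑ i', v i' * b i') / a * ∑ i, v' i * wl i := this
              _ = ∑ i, v' i * b i - (∑ i', v' i' * wl i') / a * ∑ i, v i * b i := by rw [e1]

private lemma farkas (α ι : Type) [Fintype α] [Fintype ι] (w : ι → α → ℝ) (b : α → ℝ) :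
    (∃ t : ι → ℝ, (∀ j, 0 ≤ t j) ∧ ∀ i, ∑ j, t j * w j i = b i) ∨
    (∃ v : α → ℝ, (∀ j, ∑ i, v i * w j i ≤ 0) ∧ 0 < ∑ i, v i * b i) := by
  obtain e := Fintype.equivFin ι
  rcases farkas_fin α (Fintype.card ι) (fun j' => w (e.symm j')) b with ⟨t, ht, hsum⟩ | ⟨v, hv, hvb⟩
  · refine Or.inl ⟨fun j => t (e j), fun j => ht _, fun i => ?_⟩
    rw [← hsum i]
    exact (Fintype.sum_equiv e.symm (fun j' => t j' * w (e.symm j') i)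
      (fun j => t (e j) * w j i) (fun x => by simp)).symm
  · refine Or.inr ⟨v, fun j => ?_, hvb⟩
    simpa using hv (e j)

private lemma lp_duality {α ι : Type} [Fintype α] [Fintype ι]
    (B : ι → α → ℝ) (d : ι → ℝ) (c u : α → ℝ)
    (hfeas : ∀ j, ∑ i, B j i * u i ≤ d j)
    (hopt : ∀ v : α → ℝ, (∀ j, ∑ i, B j i * v i ≤ d j) →
      ∑ i, c i * v i ≤ ∑ i, c i * u i) :
    ∃ μ : ι → ℝ, (∀ j, 0 ≤ μ j) ∧ (∀ i, ∑ j, μ j * B j i = c i) ∧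
      (∀ j, μ j * (d j - ∑ i, B j i * u i) = 0) := by
  classical
  set W : Option ι → Option α → ℝ := fun j' i' =>
    Option.casesOn j' (Option.casesOn i' 1 (fun _ => 0))
      (fun j => Option.casesOn i' (d j) (fun i => B j i)) with hW
  set bb : Option α → ℝ := fun i' => Option.casesOn i' (∑ i, c i * u i) (fun i => c i) with hbb
  rcases farkas (Option α) (Option ι) W bb with ⟨μ', hμ, hsum⟩ | ⟨v', hv, hvb⟩
  · refine ⟨fun j => μ' (some j), fun j => hμ _, ?_, ?_⟩
    · intro i
      have h := hsum (some i)
      rw [Fintype.sum_option] at h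
      simpa [hW, hbb] using h
    · have h := hsum none
      rw [Fintype.sum_option] at h
      simp only [hW, hbb, mul_one] at h
      -- h : μ' none + ∑ j, μ' (some j) * d j = ∑ i, c i * u i
      have h2 : ∑ j, μ' (some j) * (∑ i, B j i * u i) = ∑ i, c i * u i := by
        have swap : ∑ j, μ' (some j) * (∑ i, B j i * u i)
            = ∑ i, (∑ j, μ' (some j) * B j i) * u i := by
          simp_rw [Finset.mul_sum, Finset.sum_mul]
          rw [Finset.sum_comm]
          exact Finset.sum_congr rfl fun i _ => Finset.sum_congr rfl fun j _ => by ring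
        rw [swap]
        refine Finset.sum_congr rfl fun i _ => ?_
        have h := hsum (some i)
        rw [Fintype.sum_option] at h
        simp only [hW, hbb, mul_zero, zero_add] at h
        rw [h]
      have hsumle : ∑ j, μ' (some j) * (d j - ∑ i, B j i * u i) ≤ 0 := by
        have : ∑ j, μ' (some j) * (d j - ∑ i, B j i * u i)
            = (∑ j, μ' (some j) * d j) - ∑ j, μ' (some j) * (∑ i, B j i * u i) := by
          rw [← Finset.sum_sub_distrib]
          exact Finset.sum_congr rfl fun j _ => by ring
        rw [this, h2]
        have := hμ none
        linarith
      have hterms : ∀ j ∈ Finset.univ, (0:ℝ) ≤ μ' (some j) * (d j - ∑ i, B j i * u i) :=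
        fun j _ => mul_nonneg (hμ _) (by linarith [hfeas j])
      have hz : ∑ j, μ' (some j) * (d j - ∑ i, B j i * u i) = 0 :=
        le_antisymm hsumle (Finset.sum_nonneg hterms)
      intro j
      exact (Finset.sum_eq_zero_iff_of_nonneg hterms).1 hz j (Finset.mem_univ j)
  · exfalso
    set v : α → ℝ := fun i => v' (some i) with hvdef
    set t : ℝ := v' none with htdef
    have hrow : ∀ j, t * d j + ∑ i, v i * B j i ≤ 0 := by
      intro j
      have h := hv (some j)
      rw [Fintype.sum_option] at h
      simpa [hW] using h
    have ht0 : t ≤ 0 := by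
      have h := hv none
      rw [Fintype.sum_option] at h
      simpa [hW] using h
    have hpos : 0 < t * (∑ i, c i * u i) + ∑ i, v i * c i := by
      have := hvb
      rw [Fintype.sum_option] at this
      simpa [hbb] using this
    rcases eq_or_lt_of_le ht0 with hteq | htlt
    · -- t = 0
      have hfeas2 : ∀ j, ∑ i, B j i * (u i + v i) ≤ d j := by
        intro j
        have hr := hrow j
        rw [hteq, zero_mul, zero_add] at hr
        have : ∑ i, B j i * (u i + v i) = (∑ i, B j i * u i) + ∑ i, v i * B j i := by
          rw [← Finset.sum_add_distrib]
          exact Finset.sum_congr rfl fun i _ => by ring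
        rw [this]
        linarith [hfeas j]
      have := hopt _ hfeas2
      have hsplit : ∑ i, c i * (u i + v i) = (∑ i, c i * u i) + ∑ i, v i * c i := by
        rw [← Finset.sum_add_distrib]
        exact Finset.sum_congr rfl fun i _ => by ring
      rw [hsplit] at this
      rw [hteq, zero_mul, zero_add] at hpos
      linarith
    · -- t < 0
      have hpos' : (0:ℝ) < -t := by linarith
      have hfeas2 : ∀ j, ∑ i, B j i * (v i / (-t)) ≤ d j := by
        intro j
        have hr := hrow j
        have hconv : ∑ i, B j i * (v i / (-t)) = (∑ i, v i * B j i) / (-t) := by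
          rw [Finset.sum_div]
          refine Finset.sum_congr rfl fun i _ => ?_
          rw [div_eq_mul_inv, div_eq_mul_inv]; ring
        rw [hconv, div_le_iff₀ hpos']
        nlinarith
      have := hopt _ hfeas2
      have hconv : ∑ i, c i * (v i / (-t)) = (∑ i, v i * c i) / (-t) := by
        rw [Finset.sum_div]
        refine Finset.sum_congr rfl fun i _ => ?_
        rw [div_eq_mul_inv, div_eq_mul_inv]; ring
      rw [hconv, div_le_iff₀ hpos'] at this
      nlinarith

section
variable {α : Type} [Fintype α]

private lemma sum_indicator_pair {n K : ℕ} (k : Fin K) (i : Fin n) (s : ℝ) (x : Fin K × Fin n → ℝ) :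
    ∑ p : Fin K × Fin n, (if p = (k,i) then s else 0) * x p = s * x (k,i) := by
  classical
  rw [Finset.sum_eq_single (k,i)]
  · simp
  · intro p _ hp; simp [hp]
  · simp

private lemma sum_indicator_row {n K : ℕ} (k : Fin K) (s : ℝ) (x : Fin K × Fin n → ℝ) :
    ∑ p : Fin K × Fin n, (if p.1 = k then s else 0) * x p = s * ∑ i, x (k,i) := by
  classical
  rw [Fintype.sum_prod_type]
  rw [Finset.sum_eq_single k]
  · simp [Finset.mul_sum]
  · intro k' _ hk'; simp [hk']
  · simp

private lemma sum_indicator_col {n K : ℕ} (i : Fin n) (s : ℝ) (x : Fin K × Fin n → ℝ) :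
    ∑ p : Fin K × Fin n, (if p.2 = i then s else 0) * x p = s * ∑ k, x (k,i) := by
  classical
  rw [Fintype.sum_prod_type_right]
  rw [Finset.sum_eq_single i]
  · simp [Finset.mul_sum]
  · intro i' _ hi'; simp [hi']
  · simp

end

/-- For `uₖ* ∈ Δₖ` with `N = ∑ₖ uₖ*`: there exists a price vector `y` making
each `uₖ*` optimal over `Δₖ` if and only if the `uₖ*` realize the minimum in
the infimal convolution at `N`, i.e. `∑ₖ ⟨ρₖ,uₖ*⟩` is maximal among all
decompositions of `N` into elements `vₖ ∈ Δₖ`. -/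
theorem stmt_9 (n K : ℕ) (R : Fin K → ℕ) (hR : ∀ k, R k ≤ n)
    (J : Fin K → Set (Fin n)) (ρ : Fin K → Fin n → ℝ)
    (Δ : Fin K → Set (Fin n → ℝ))
    (hΔ : ∀ k, Δ k = {u : Fin n → ℝ |
      (∀ i, u i ∈ Set.Icc (0 : ℝ) 1) ∧ (∑ i, u i) = (R k : ℝ) ∧ ∀ i ∈ J k, u i = 0})
    (ustar : Fin K → Fin n → ℝ) (hu : ∀ k, ustar k ∈ Δ k) :
    (∃ y : Fin n → ℝ, ∀ k, ∀ v ∈ Δ k,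
        ∑ i, (ρ k i + y i) * v i ≤ ∑ i, (ρ k i + y i) * ustar k i)
    ↔ (∀ v : Fin K → Fin n → ℝ, (∀ k, v k ∈ Δ k) → (∑ k, v k) = (∑ k, ustar k) →
        ∑ k, ∑ i, ρ k i * v k i ≤ ∑ k, ∑ i, ρ k i * ustar k i) := by
  classical
  constructor
  · -- easy direction
    rintro ⟨y, hy⟩ v hv hsum
    have hyv : ∑ k, ∑ i, y i * v k i = ∑ k, ∑ i, y i * ustar k i := by
      rw [Finset.sum_comm, Finset.sum_comm (γ := Fin K)]
      refine Finset.sum_congr rfl fun i _ => ?_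
      rw [← Finset.mul_sum, ← Finset.mul_sum]
      have := congrFun hsum i
      simp only [Finset.sum_apply] at this
      rw [this]
    have hk : ∀ k, ∑ i, (ρ k i + y i) * v k i ≤ ∑ i, (ρ k i + y i) * ustar k i :=
      fun k => hy k (v k) (hv k)
    have hK := Finset.sum_le_sum (fun k (_ : k ∈ Finset.univ) => hk k)
    have hexp : ∀ (z : Fin K → Fin n → ℝ),
        ∑ k, ∑ i, (ρ k i + y i) * z k i
          = (∑ k, ∑ i, ρ k i * z k i) + ∑ k, ∑ i, y i * z k i := by
      intro z
      rw [← Finset.sum_add_distrib]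
      refine Finset.sum_congr rfl fun k _ => ?_
      rw [← Finset.sum_add_distrib]
      exact Finset.sum_congr rfl fun i _ => by ring
    rw [hexp, hexp] at hK
    linarith
  · -- hard direction
    intro h
    set α : Type := Fin K × Fin n with hα
    set N : Fin n → ℝ := fun i => ∑ k, ustar k i with hN
    set BX : ((Fin K × Fin n × Fin 3) ⊕ (Fin K × Fin 2)) → α → ℝ := fun j p =>
      match j with
      | Sum.inl (k,i,z) => if p = (k,i) then
          (if z = 0 then -1 else if z = 1 then 1 else (if i ∈ J k then 1 else 0)) else 0
      | Sum.inr (k,z) => if p.1 = k then (if z = 0 then 1 else -1) else 0 with hBX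
    set dX : ((Fin K × Fin n × Fin 3) ⊕ (Fin K × Fin 2)) → ℝ := fun j =>
      match j with
      | Sum.inl (_,_,z) => if z = 1 then 1 else 0
      | Sum.inr (k,z) => if z = 0 then (R k : ℝ) else -(R k : ℝ) with hdX
    set BC : (Fin n × Fin 2) → α → ℝ := fun j p =>
      if p.2 = j.1 then (if j.2 = 0 then 1 else -1) else 0 with hBC
    set dC : (Fin n × Fin 2) → ℝ := fun j => if j.2 = 0 then N j.1 else -N j.1 with hdC
    set c : α → ℝ := fun p => ρ p.1 p.2 with hc
    set u : α → ℝ := fun p => ustar p.1 p.2 with hudef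
    -- X-rows hold for any member of the product of the Δ k
    have hfeasX : ∀ (w : Fin K → Fin n → ℝ), (∀ k, w k ∈ Δ k) →
        ∀ jX, ∑ p : α, BX jX p * (fun p : α => w p.1 p.2) p ≤ dX jX := by
      intro w hw jX
      rcases jX with ⟨k,i,z⟩ | ⟨k,z⟩
      · have hmem := hw k
        rw [hΔ k] at hmem
        obtain ⟨hbox, hsum, hJ⟩ := hmem
        have hcomp := sum_indicator_pair (n := n) (K := K) k i
          (if z = 0 then -1 else if z = 1 then 1 else (if i ∈ J k then 1 else 0))
          (fun p => w p.1 p.2)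
        simp only [hBX, hdX]
        rw [hcomp]
        fin_cases z
        · simpa using (hbox i).1
        · simpa using (hbox i).2
        · by_cases hJk : i ∈ J k
          · simp [hJk, hJ i hJk]
          · simp [hJk]
      · have hmem := hw k
        rw [hΔ k] at hmem
        obtain ⟨hbox, hsum, hJ⟩ := hmem
        have hcomp := sum_indicator_row (n := n) (K := K) k
          (if z = 0 then 1 else -1) (fun p => w p.1 p.2)
        simp only [hBX, hdX]
        rw [hcomp]
        fin_cases z
        · simp [hsum]
        · simp [hsum]
    have hfeas : ∀ j, ∑ p : α, (Sum.elim BX BC j) p * u p ≤ Sum.elim dX dC j := by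
      intro j
      rcases j with jX | ⟨i,z⟩
      · exact hfeasX ustar hu jX
      · have hcomp := sum_indicator_col (n := n) (K := K) i
          (if z = 0 then 1 else -1) u
        simp only [Sum.elim_inr, hBC, hdC]
        rw [hcomp]
        have : ∑ k, u (k, i) = N i := rfl
        rw [this]
        fin_cases z <;> simp
    have hopt : ∀ v : α → ℝ,
        (∀ j, ∑ p : α, (Sum.elim BX BC j) p * v p ≤ Sum.elim dX dC j) →
        ∑ p : α, c p * v p ≤ ∑ p : α, c p * u p := by
      intro v hv
      set V : Fin K → Fin n → ℝ := fun k i => v (k,i) with hV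
      have hrow1 : ∀ k i, 0 ≤ V k i := by
        intro k i
        have := hv (Sum.inl (Sum.inl (k,i,0)))
        rw [Sum.elim_inl] at this
        rw [sum_indicator_pair k i _ v] at this  -- needs defeq unfolding of BX
        simpa [hdX] using this
      have hrow2 : ∀ k i, V k i ≤ 1 := by
        intro k i
        have := hv (Sum.inl (Sum.inl (k,i,1)))
        rw [Sum.elim_inl] at this
        rw [sum_indicator_pair k i _ v] at this
        simpa [hdX] using this
      have hrow5 : ∀ k, ∀ i ∈ J k, V k i = 0 := by
        intro k i hik
        have := hv (Sum.inl (Sum.inl (k,i,2)))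
        rw [Sum.elim_inl] at this
        rw [sum_indicator_pair k i _ v] at this
        simp only [hdX] at this
        rw [if_pos hik] at this
        norm_num at this
        exact le_antisymm this (hrow1 k i)
      have hrow34 : ∀ k, ∑ i, V k i = (R k : ℝ) := by
        intro k
        have h3 := hv (Sum.inl (Sum.inr (k,0)))
        have h4 := hv (Sum.inl (Sum.inr (k,1)))
        rw [Sum.elim_inl] at h3 h4
        rw [sum_indicator_row k _ v] at h3 h4
        simp only [hdX] at h3 h4
        norm_num at h3 h4
        have : ∀ i, v (k, i) = V k i := fun i => rfl
        simp only [this] at h3 h4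
        linarith
      have hrow67 : ∀ i, ∑ k, V k i = N i := by
        intro i
        have h6 := hv (Sum.inr (i,0))
        have h7 := hv (Sum.inr (i,1))
        rw [Sum.elim_inr] at h6 h7
        rw [sum_indicator_col i _ v] at h6 h7
        simp only [hdC] at h6 h7
        norm_num at h6 h7
        have : ∀ k, v (k, i) = V k i := fun k => rfl
        simp only [this] at h6 h7
        linarith
      have hVmem : ∀ k, V k ∈ Δ k := by
        intro k
        rw [hΔ k]
        exact ⟨fun i => ⟨hrow1 k i, hrow2 k i⟩, hrow34 k, hrow5 k⟩
      have hVsum : (∑ k, V k) = ∑ k, ustar k := by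
        funext i
        simp only [Finset.sum_apply]
        rw [hrow67 i]
      have := h V hVmem hVsum
      rw [Fintype.sum_prod_type, Fintype.sum_prod_type]
      exact this
    obtain ⟨μ, hμ0, hμeq, hμcs⟩ := lp_duality (Sum.elim BX BC) (Sum.elim dX dC) c u hfeas hopt
    set y : Fin n → ℝ := fun i => μ (Sum.inr (i,1)) - μ (Sum.inr (i,0)) with hy
    -- the reduced cost identity
    have hc' : ∀ p : α, ∑ jX, μ (Sum.inl jX) * BX jX p = ρ p.1 p.2 + y p.2 := by
      intro p
      have heq := hμeq p
      rw [Fintype.sum_sum_type] at heq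
      have hCpart : ∑ jC : Fin n × Fin 2, μ (Sum.inr jC) * (Sum.elim BX BC (Sum.inr jC)) p
          = μ (Sum.inr (p.2, 0)) - μ (Sum.inr (p.2, 1)) := by
        simp only [Sum.elim_inr]
        rw [Fintype.sum_prod_type]
        rw [Finset.sum_eq_single p.2]
        · simp [hBC, Fin.sum_univ_two, sub_eq_add_neg]
        · intro i' _ hi'
          have : p.2 ≠ i' := fun hc => hi' hc.symm
          simp [hBC, this]
        · simp
      rw [hCpart] at heq
      simp only [Sum.elim_inl] at heq
      simp only [hc] at heq
      have hyp : y p.2 = μ (Sum.inr (p.2,1)) - μ (Sum.inr (p.2,0)) := rfl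
      rw [hyp]
      linarith
    -- aggregated optimality with prices
    have hagg : ∀ w : Fin K → Fin n → ℝ, (∀ k, w k ∈ Δ k) →
        ∑ p : α, (ρ p.1 p.2 + y p.2) * w p.1 p.2
          ≤ ∑ p : α, (ρ p.1 p.2 + y p.2) * ustar p.1 p.2 := by
      intro w hw
      have hswap : ∀ x : α → ℝ,
          ∑ p : α, (∑ jX, μ (Sum.inl jX) * BX jX p) * x p
            = ∑ jX, μ (Sum.inl jX) * (∑ p : α, BX jX p * x p) := by
        intro x
        simp_rw [Finset.sum_mul, Finset.mul_sum]
        rw [Finset.sum_comm]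
        exact Finset.sum_congr rfl fun jX _ => Finset.sum_congr rfl fun p _ => by ring
      have e1 : ∑ p : α, (ρ p.1 p.2 + y p.2) * w p.1 p.2
          = ∑ jX, μ (Sum.inl jX) * (∑ p : α, BX jX p * w p.1 p.2) := by
        rw [← hswap]
        exact Finset.sum_congr rfl fun p _ => by rw [hc' p]
      have e2 : ∑ p : α, (ρ p.1 p.2 + y p.2) * ustar p.1 p.2
          = ∑ jX, μ (Sum.inl jX) * (∑ p : α, BX jX p * ustar p.1 p.2) := by
        rw [← hswap]
        exact Finset.sum_congr rfl fun p _ => by rw [hc' p]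
      rw [e1, e2]
      have step1 : ∑ jX, μ (Sum.inl jX) * (∑ p : α, BX jX p * w p.1 p.2)
          ≤ ∑ jX, μ (Sum.inl jX) * dX jX := by
        refine Finset.sum_le_sum fun jX _ => ?_
        exact mul_le_mul_of_nonneg_left (hfeasX w hw jX) (hμ0 _)
      have step2 : ∑ jX, μ (Sum.inl jX) * dX jX
          = ∑ jX, μ (Sum.inl jX) * (∑ p : α, BX jX p * ustar p.1 p.2) := by
        refine Finset.sum_congr rfl fun jX _ => ?_
        have := hμcs (Sum.inl jX)
        simp only [Sum.elim_inl] at this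
        have hrw : ∑ p : α, BX jX p * u p = ∑ p : α, BX jX p * ustar p.1 p.2 :=
          Finset.sum_congr rfl fun p _ => rfl
        rw [hrw] at this
        nlinarith [this]
      calc ∑ jX, μ (Sum.inl jX) * (∑ p : α, BX jX p * w p.1 p.2)
          ≤ ∑ jX, μ (Sum.inl jX) * dX jX := step1
        _ = ∑ jX, μ (Sum.inl jX) * (∑ p : α, BX jX p * ustar p.1 p.2) := step2
    -- per-customer optimality
    refine ⟨y, fun k v hv => ?_⟩
    set w : Fin K → Fin n → ℝ := Function.update ustar k v with hw
    have hwmem : ∀ k', w k' ∈ Δ k' := by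
      intro k'
      by_cases hk' : k' = k
      · subst hk'; rw [hw, Function.update_self]; exact hv
      · rw [hw, Function.update_of_ne hk']; exact hu k'
    have := hagg w hwmem
    rw [Fintype.sum_prod_type, Fintype.sum_prod_type] at this
    have split : ∀ (z : Fin K → Fin n → ℝ),
        ∑ k', ∑ i, (ρ k' i + y i) * z k' i
          = (∑ i, (ρ k i + y i) * z k i)
            + ∑ k' ∈ Finset.univ.erase k, ∑ i, (ρ k' i + y i) * z k' i :=
      fun z => (Finset.add_sum_erase Finset.univ
        (fun k' => ∑ i, (ρ k' i + y i) * z k' i) (Finset.mem_univ k)).symm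
    rw [split w, split ustar] at this
    have herase : ∑ k' ∈ Finset.univ.erase k, ∑ i, (ρ k' i + y i) * w k' i
        = ∑ k' ∈ Finset.univ.erase k, ∑ i, (ρ k' i + y i) * ustar k' i := by
      refine Finset.sum_congr rfl fun k' hk' => ?_
      have hne : k' ≠ k := Finset.ne_of_mem_erase hk'
      rw [hw, Function.update_of_ne hne]
    rw [herase] at this
    have hwk : ∀ i, w k i = v i := fun i => by rw [hw, Function.update_self]
    simp only [hwk] at this
    linarith
end

section
/- Let N ∈ ℤ^n and let u_k* ∈ F_k (k = 1,…,K) satisfy N = ∑_{k=1}^K u_k* and ∑_{k=1}^K ⟨ρ_k, u_k*⟩ ≥ ∑_{k=1}^K ⟨ρ_k, v_k⟩ for all v_k ∈ F_k with ∑_{k=1}^K v_k = N (an optimal decomposition of N). Then the set of vectors y ∈ ℝ^n such that for every k, u_k* maximizes v ↦ ⟨ρ_k + y, v⟩ over F_k, is nonempty, and it equals the polyhedron of all y ∈ ℝ^n satisfying: for every k ∈ {1,…,K} and every pair of indices i, j ∉ J_k with u_k*(i) = 1 and u_k*(j) = 0, one has ρ_k(i) + y_i ≥ ρ_k(j) +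 y_j. -/
open Finset

section Walks
variable {n K : ℕ} (J : Fin K → Set (Fin n)) (ustar : Fin K → Fin n → ℝ)

def PA (k : Fin K) (i j : Fin n) : Prop :=
  i ∉ J k ∧ j ∉ J k ∧ ustar k i = 1 ∧ ustar k j = 0

inductive Wk : Fin n → Fin n → Type
  | nil (i : Fin n) : Wk i i
  | snoc {i j l : Fin n} (p : Wk i j) (k : Fin K) (h : PA J ustar k j l) : Wk i l

namespace Wk
variable {J} {ustar}

def arcs {i : Fin n} : ∀ {j : Fin n}, Wk J ustar i j → List (Fin K × Fin n × Fin n)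
  | _, .nil _ => []
  | _, @Wk.snoc _ _ _ _ _ j l p k _ => arcs p ++ [(k, j, l)]

variable (ρ : Fin K → Fin n → ℝ)

def weight {i j : Fin n} (p : Wk J ustar i j) : ℝ :=
  ((arcs p).map fun a => ρ a.1 a.2.1 - ρ a.1 a.2.2).sum

def len {i j : Fin n} (p : Wk J ustar i j) : ℕ := (arcs p).length

def starts {i j : Fin n} (p : Wk J ustar i j) : List (Fin n) := (arcs p).map (·.2.1)
def ends {i j : Fin n} (p : Wk J ustar i j) : List (Fin n) := (arcs p).map (·.2.2)
def vlist {i j : Fin n} (p : Wk J ustar i j) : List (Fin n) := i :: ends p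

def append {i j : Fin n} (p : Wk J ustar i j) : ∀ {l : Fin n}, Wk J ustar j l → Wk J ustar i l
  | _, .nil _ => p
  | _, .snoc q k h => .snoc (append p q) k h

@[simp] lemma arcs_nil (i : Fin n) : arcs (Wk.nil (J := J) (ustar := ustar) i) = [] := by simp [arcs]
@[simp] lemma arcs_snoc {i j l : Fin n} (p : Wk J ustar i j) (k : Fin K) (h : PA J ustar k j l) :
    arcs (p.snoc k h) = arcs p ++ [(k, j, l)] := by simp [arcs]

@[simp] lemma arcs_append {i j : Fin n} (p : Wk J ustar i j) : ∀ {l : Fin n} (q : Wk J ustar j l),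
    arcs (p.append q) = arcs p ++ arcs q
  | _, .nil _ => by simp [append]
  | _, .snoc q k h => by simp [append, arcs_append p q]

lemma weight_append {i j l : Fin n} (p : Wk J ustar i j) (q : Wk J ustar j l) :
    weight ρ (p.append q) = weight ρ p + weight ρ q := by
  simp [weight]

lemma len_append {i j l : Fin n} (p : Wk J ustar i j) (q : Wk J ustar j l) :
    len (p.append q) = len p + len q := by simp [len]

lemma mem_arcs_valid {i : Fin n} : ∀ {j : Fin n} (p : Wk J ustar i j)
    {a : Fin K × Fin n × Fin n}, a ∈ arcs p → PA J ustar a.1 a.2.1 a.2.2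
  | _, .nil _, a, ha => by simp [arcs] at ha
  | _, .snoc p k h, a, ha => by
      rw [arcs_snoc] at ha
      rcases List.mem_append.1 ha with h1 | h2
      · exact mem_arcs_valid p h1
      · simp at h2; subst h2; exact h

lemma vlist_eq {i : Fin n} : ∀ {j : Fin n} (p : Wk J ustar i j), vlist p = starts p ++ [j]
  | _, .nil _ => by simp [vlist, ends, starts]
  | _, @Wk.snoc _ _ _ _ _ j l p k h => by
      have ih := vlist_eq p
      simp only [vlist, ends, starts, arcs_snoc, List.map_append] at ih ⊢
      rw [← List.cons_append, ih]
      simp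

end Wk
end Walks


section split
variable {J : Fin K → Set (Fin n)} {ustar : Fin K → Fin n → ℝ}

namespace Wk

@[simp] lemma vlist_snoc {i j l : Fin n} (p : Wk J ustar i j) (k : Fin K) (h : PA J ustar k j l) :
    vlist (p.snoc k h) = vlist p ++ [l] := by
  simp [vlist, ends]

@[simp] lemma starts_snoc {i j l : Fin n} (p : Wk J ustar i j) (k : Fin K) (h : PA J ustar k j l) :
    starts (p.snoc k h) = starts p ++ [j] := by
  simp [starts]

@[simp] lemma append_nil {i j : Fin n} (p : Wk J ustar i j) : p.append (Wk.nil j) = p := by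
  simp [append]

@[simp] lemma append_snoc {i j l m : Fin n} (p : Wk J ustar i j) (q : Wk J ustar j l)
    (k : Fin K) (h : PA J ustar k l m) :
    p.append (q.snoc k h) = (p.append q).snoc k h := by
  simp [append]

lemma split_mem {i : Fin n} : ∀ {j : Fin n} (p : Wk J ustar i j) {y : Fin n}, y ∈ vlist p →
    ∃ (q : Wk J ustar i y) (r : Wk J ustar y j), p = q.append r
  | _, .nil _, y, hy => by
      simp [vlist, ends] at hy
      subst hy
      exact ⟨.nil y, .nil y, by simp⟩
  | _, @Wk.snoc _ _ _ _ _ j l p k h, y, hy => by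
      rw [vlist_snoc] at hy
      rcases List.mem_append.1 hy with h1 | h2
      · obtain ⟨q, r, hqr⟩ := split_mem p h1
        exact ⟨q, r.snoc k h, by rw [hqr, append_snoc]⟩
      · simp at h2
        subst h2
        exact ⟨p.snoc k h, .nil y, by simp⟩

lemma dup_split {i : Fin n} : ∀ {j : Fin n} (p : Wk J ustar i j), ¬ (vlist p).Nodup →
    ∃ (y : Fin n) (q : Wk J ustar i y) (c : Wk J ustar y y) (r : Wk J ustar y j),
      p = q.append (c.append r) ∧ 1 ≤ len c
  | _, .nil _, hnd => by simp [vlist, ends] at hnd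
  | _, @Wk.snoc _ _ _ _ _ j l p k h, hnd => by
      by_cases hp : (vlist p).Nodup
      · have hl : l ∈ vlist p := by
          rw [vlist_snoc] at hnd
          by_contra hl
          exact hnd (by simpa [List.nodup_append] using ⟨hp, fun a ha hal => hl (hal ▸ ha)⟩)
        obtain ⟨q, r, hqr⟩ := split_mem p hl
        refine ⟨l, q, r.snoc k h, .nil l, ?_, ?_⟩
        · rw [hqr]; simp
        · simp [len]
      · obtain ⟨y, q, c, r, hqr, hc⟩ := dup_split p hp
        exact ⟨y, q, c, r.snoc k h, by rw [hqr]; simp, hc⟩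

lemma closed_split {x : Fin n} (p : Wk J ustar x x) (hlen : 1 ≤ len p)
    (hnd : ¬ (starts p).Nodup) :
    ∃ (y : Fin n) (q : Wk J ustar x y) (c : Wk J ustar y y) (r : Wk J ustar y x),
      p = q.append (c.append r) ∧ 1 ≤ len c ∧ len c < len p := by
  cases p with
  | nil => simp [len] at hlen
  | snoc p k h =>
      have hv : ¬ (vlist p).Nodup := by
        rw [starts_snoc, ← vlist_eq] at hnd
        exact hnd
      obtain ⟨y, q, c, r, hqr, hc⟩ := dup_split p hv
      refine ⟨y, q, c, r.snoc k h, by rw [hqr]; simp, hc, ?_⟩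
      have h1 : len (p.snoc k h) = len p + 1 := by simp [len]
      have h2 : len p = len q + (len c + len r) := by rw [hqr]; simp [len_append]
      omega

end Wk
end split
section Exchange
variable {n K : ℕ} {R : Fin K → ℕ} {J : Fin K → Set (Fin n)} {ρ : Fin K → Fin n → ℝ}
  {F : Fin K → Set (Fin n → ℝ)} {ustar : Fin K → Fin n → ℝ} {N : Fin n → ℝ}

open Wk

lemma key
    (hF : ∀ k, F k = {u : Fin n → ℝ |
      (∀ i, u i = 0 ∨ u i = 1) ∧ (∑ i, u i) = (R k : ℝ) ∧ ∀ i ∈ J k, u i = 0})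
    (hu : ∀ k, ustar k ∈ F k) (hN : N = ∑ k, ustar k)
    (hopt : ∀ v : Fin K → Fin n → ℝ, (∀ k, v k ∈ F k) → (∑ k, v k) = N →
      ∑ k, ∑ i, ρ k i * v k i ≤ ∑ k, ∑ i, ρ k i * ustar k i)
    {x : Fin n} (c : Wk J ustar x x) (hnd : (starts c).Nodup) :
    0 ≤ weight ρ c := by
  classical
  by_contra hw
  push_neg at hw
  set L := arcs c with hL
  have hndL : L.Nodup := List.Nodup.of_map _ hnd
  have hvl1 : vlist c = x :: ends c := rfl
  have hvl2 : vlist c = starts c ++ [x] := vlist_eq c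
  have hperm : (ends c).Perm (starts c) := by
    have h3 : (x :: ends c).Perm (x :: starts c) :=
      (hvl1 ▸ hvl2 ▸ List.perm_append_singleton x (starts c) : (x :: ends c).Perm (x :: starts c))
    exact (List.perm_cons x).1 h3
  have hndE : (ends c).Nodup := (hperm.symm.nodup_iff).1 hnd
  have hSinj := List.inj_on_of_nodup_map (hnd : (L.map (·.2.1)).Nodup)
  have hEinj := List.inj_on_of_nodup_map (hndE : (L.map (·.2.2)).Nodup)
  have hval : ∀ a ∈ L, PA J ustar a.1 a.2.1 a.2.2 := fun a ha => mem_arcs_valid c ha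
  set T := L.toFinset with hT
  have hmemT : ∀ a, a ∈ T ↔ a ∈ L := fun a => List.mem_toFinset
  set G : Fin K → (Fin K × Fin n × Fin n) → (Fin n → ℝ) :=
    fun k a => if a.1 = k then (Pi.single a.2.2 (1:ℝ) - Pi.single a.2.1 1) else (0 : Fin n → ℝ)
    with hG
  set vv : Fin K → Fin n → ℝ := fun k => ustar k + ∑ a ∈ T, G k a with hvv
  -- coordinatewise formula
  have hvki : ∀ k i, vv k i = ustar k i +
      (((T.filter (fun a => a.1 = k ∧ a.2.2 = i)).card : ℝ)
        - ((T.filter (fun a => a.1 = k ∧ a.2.1 = i)).card : ℝ)) := by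
    intro k i
    have h4 : ∀ a ∈ T, G k a i
        = (if a.1 = k ∧ a.2.2 = i then (1:ℝ) else 0) - (if a.1 = k ∧ a.2.1 = i then (1:ℝ) else 0) := by
      intro a _
      by_cases h1 : a.1 = k
      · simp only [hG, h1, if_true, true_and, Pi.sub_apply, Pi.single_apply]
        congr 1 <;> exact if_congr eq_comm rfl rfl
      · simp [hG, h1]
    simp only [hvv, Pi.add_apply, Finset.sum_apply]
    rw [Finset.sum_congr rfl h4, Finset.sum_sub_distrib, Finset.sum_boole, Finset.sum_boole]
  have hE1 : ∀ k i, (T.filter (fun a => a.1 = k ∧ a.2.2 = i)).card ≤ 1 := by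
    intro k i
    refine Finset.card_le_one.2 fun a ha b hb => ?_
    simp only [Finset.mem_filter, hmemT] at ha hb
    exact hEinj ha.1 hb.1 (by rw [ha.2.2, hb.2.2])
  have hS1 : ∀ k i, (T.filter (fun a => a.1 = k ∧ a.2.1 = i)).card ≤ 1 := by
    intro k i
    refine Finset.card_le_one.2 fun a ha b hb => ?_
    simp only [Finset.mem_filter, hmemT] at ha hb
    exact hSinj ha.1 hb.1 (by rw [ha.2.2, hb.2.2])
  have hEu : ∀ k i, (T.filter (fun a => a.1 = k ∧ a.2.2 = i)).Nonempty → ustar k i = 0 := by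
    rintro k i ⟨a, ha⟩
    simp only [Finset.mem_filter, hmemT] at ha
    have h5 := (hval a ha.1).2.2.2
    rw [ha.2.1, ha.2.2] at h5; exact h5
  have hSu : ∀ k i, (T.filter (fun a => a.1 = k ∧ a.2.1 = i)).Nonempty → ustar k i = 1 := by
    rintro k i ⟨a, ha⟩
    simp only [Finset.mem_filter, hmemT] at ha
    have h5 := (hval a ha.1).2.2.1
    rw [ha.2.1, ha.2.2] at h5; exact h5
  -- membership in F k
  have hvF : ∀ k, vv k ∈ F k := by
    intro k
    obtain ⟨h01, hsum, hJ0⟩ : (∀ i, ustar k i = 0 ∨ ustar k i = 1) ∧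
        (∑ i, ustar k i) = (R k : ℝ) ∧ ∀ i ∈ J k, ustar k i = 0 := by
      have := hu k; rwa [hF k] at this
    rw [hF k]
    refine ⟨?_, ?_, ?_⟩
    · intro i
      have h1 := hE1 k i
      have h2 := hS1 k i
      rcases Nat.le_one_iff_eq_zero_or_eq_one.1 h1 with hE0 | hEone
      · rcases Nat.le_one_iff_eq_zero_or_eq_one.1 h2 with hS0 | hSone
        · rw [hvki k i, hE0, hS0]; simpa using h01 i
        · have h6 : ustar k i = 1 := hSu k i (Finset.card_pos.1 (by omega))
          rw [hvki k i, hE0, hSone, h6]; left; norm_num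
      · have hui : ustar k i = 0 := hEu k i (Finset.card_pos.1 (by omega))
        have hS0 : (T.filter (fun a => a.1 = k ∧ a.2.1 = i)).card = 0 := by
          by_contra hS0
          have h6 : ustar k i = 1 := hSu k i (Finset.card_pos.1 (by omega))
          rw [h6] at hui; norm_num at hui
        rw [hvki k i, hEone, hS0, hui]; right; norm_num
    · have hz : ∀ a ∈ T, ∑ i, G k a i = 0 := by
        intro a _
        by_cases h1 : a.1 = k <;>
          simp [hG, h1, Pi.sub_apply, Finset.sum_sub_distrib, Finset.sum_pi_single']
      calc ∑ i, vv k i = (∑ i, ustar k i) + ∑ a ∈ T, ∑ i, G k a i := by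
            simp only [hvv, Pi.add_apply, Finset.sum_apply]
            rw [Finset.sum_add_distrib, Finset.sum_comm]
        _ = (R k : ℝ) := by rw [Finset.sum_congr rfl hz, hsum]; simp
    · intro i hi
      have hEe : (T.filter (fun a => a.1 = k ∧ a.2.2 = i)) = ∅ := by
        rw [Finset.filter_eq_empty_iff]
        rintro a ha ⟨h1, h2⟩
        subst h1; subst h2
        exact (hval a ((hmemT a).1 ha)).2.1 hi
      have hSe : (T.filter (fun a => a.1 = k ∧ a.2.1 = i)) = ∅ := by
        rw [Finset.filter_eq_empty_iff]
        rintro a ha ⟨h1, h2⟩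
        subst h1; subst h2
        exact (hval a ((hmemT a).1 ha)).1 hi
      rw [hvki k i, hEe, hSe, hJ0 i hi]; simp
  -- sum over k is N
  have hsumv : (∑ k, vv k) = N := by
    have h1 : (∑ k, vv k) = N + ∑ a ∈ T,
        ((Pi.single a.2.2 (1:ℝ) : Fin n → ℝ) - (Pi.single a.2.1 (1:ℝ) : Fin n → ℝ)) := by
      rw [hvv, Finset.sum_add_distrib, ← hN, Finset.sum_comm]
      congr 1
      refine Finset.sum_congr rfl fun a _ => ?_
      simp only [hG, Finset.sum_ite_eq, Finset.mem_univ, if_true]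
    have h2 : ∑ a ∈ T,
        ((Pi.single a.2.2 (1:ℝ) : Fin n → ℝ) - (Pi.single a.2.1 (1:ℝ) : Fin n → ℝ)) = 0 := by
      rw [Finset.sum_sub_distrib]
      have e1 : ∑ a ∈ T, (Pi.single a.2.2 (1:ℝ) : Fin n → ℝ)
          = ((ends c).map (fun e => Pi.single e (1:ℝ))).sum := by
        rw [hT, List.sum_toFinset _ hndL]
        simp only [ends, List.map_map]
        rfl
      have e2 : ∑ a ∈ T, (Pi.single a.2.1 (1:ℝ) : Fin n → ℝ)
          = ((starts c).map (fun e => Pi.single e (1:ℝ))).sum := by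
        rw [hT, List.sum_toFinset _ hndL]
        simp only [starts, List.map_map]
        rfl
      rw [e1, e2, (hperm.map (fun e => Pi.single e (1:ℝ))).sum_eq, sub_self]
    rw [h1, h2, add_zero]
  -- value computation
  have hsingle : ∀ (g : Fin n → ℝ) (j : Fin n),
      ∑ i, g i * (Pi.single j (1:ℝ) : Fin n → ℝ) i = g j := by
    intro g j
    rw [Finset.sum_eq_single j]
    · simp
    · intro b _ hbj
      simp [Pi.single_apply, hbj]
    · intro h; exact absurd (Finset.mem_univ j) h
  have hval2 : ∑ k, ∑ i, ρ k i * vv k i = (∑ k, ∑ i, ρ k i * ustar k i) - weight ρ c := by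
    have h1 : ∀ k, ∑ i, ρ k i * vv k i = (∑ i, ρ k i * ustar k i) +
        ∑ a ∈ T, (if a.1 = k then (ρ k a.2.2 - ρ k a.2.1) else 0) := by
      intro k
      have h4 : ∀ a ∈ T, ∑ i, ρ k i * G k a i
          = (if a.1 = k then (ρ k a.2.2 - ρ k a.2.1) else 0) := by
        intro a _
        by_cases h2 : a.1 = k
        · simp only [hG, h2, if_true]
          rw [← hsingle (ρ k) a.2.2, ← hsingle (ρ k) a.2.1, ← Finset.sum_sub_distrib]
          refine Finset.sum_congr rfl fun i _ => ?_
          simp [mul_sub]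
        · simp [hG, h2]
      have h5 : ∑ i, ρ k i * vv k i = (∑ i, ρ k i * ustar k i) + ∑ i, ∑ a ∈ T, ρ k i * G k a i := by
        simp only [hvv, Pi.add_apply, Finset.sum_apply, mul_add, Finset.mul_sum]
        rw [Finset.sum_add_distrib]
      rw [h5, Finset.sum_comm, Finset.sum_congr rfl h4]
    rw [Finset.sum_congr rfl fun k _ => h1 k, Finset.sum_add_distrib]
    congr 1
    rw [Finset.sum_comm]
    have h3 : ∀ a ∈ T, ∑ k, (if a.1 = k then (ρ k a.2.2 - ρ k a.2.1) else 0)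
        = ρ a.1 a.2.2 - ρ a.1 a.2.1 := by
      intro a _
      simp only [Finset.sum_ite_eq, Finset.mem_univ, if_true]
    have hneg : ∀ (l : List (Fin K × Fin n × Fin n)),
        (l.map fun a => ρ a.1 a.2.2 - ρ a.1 a.2.1).sum
          = -((l.map fun a => ρ a.1 a.2.1 - ρ a.1 a.2.2).sum) := by
      intro l
      induction l with
      | nil => simp
      | cons a t ih => simp [ih]; ring
    rw [Finset.sum_congr rfl h3, hT, List.sum_toFinset _ hndL, weight, ← hL, hneg]
  have hfin := hopt vv hvF hsumv
  rw [hval2] at hfin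
  linarith
end Exchange
section NNC
variable {n K : ℕ} {R : Fin K → ℕ} {J : Fin K → Set (Fin n)} {ρ : Fin K → Fin n → ℝ}
  {F : Fin K → Set (Fin n → ℝ)} {ustar : Fin K → Fin n → ℝ} {N : Fin n → ℝ}

open Wk

lemma weight_of_len_zero {i j : Fin n} (p : Wk J ustar i j) (h : len p = 0) :
    weight ρ p = 0 := by
  rw [weight, List.length_eq_zero_iff.1 (h : (arcs p).length = 0)]
  simp

lemma nnc
    (hF : ∀ k, F k = {u : Fin n → ℝ |
      (∀ i, u i = 0 ∨ u i = 1) ∧ (∑ i, u i) = (R k : ℝ) ∧ ∀ i ∈ J k, u i = 0})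
    (hu : ∀ k, ustar k ∈ F k) (hN : N = ∑ k, ustar k)
    (hopt : ∀ v : Fin K → Fin n → ℝ, (∀ k, v k ∈ F k) → (∑ k, v k) = N →
      ∑ k, ∑ i, ρ k i * v k i ≤ ∑ k, ∑ i, ρ k i * ustar k i) :
    ∀ (m : ℕ) {x : Fin n} (c : Wk J ustar x x), len c ≤ m → 0 ≤ weight ρ c := by
  intro m
  induction m with
  | zero =>
      intro x c hc
      rw [weight_of_len_zero c (Nat.le_zero.1 hc)]
  | succ m ih =>
      intro x c hc
      by_cases hle : len c ≤ m
      · exact ih c hle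
      · have hlen : 1 ≤ len c := by omega
        by_cases hnd : (starts c).Nodup
        · exact key hF hu hN hopt c hnd
        · obtain ⟨y, q, c1, r, hsplit, hc1, hc1lt⟩ := closed_split c hlen hnd
          have hw : weight ρ c = weight ρ (q.append r) + weight ρ c1 := by
            rw [hsplit, weight_append, weight_append, weight_append]
            ring
          have hl : len c = len q + len c1 + len r := by
            rw [hsplit, len_append, len_append]
            ring
          have h1 : 0 ≤ weight ρ c1 := ih c1 (by omega)
          have h2 : 0 ≤ weight ρ (q.append r) := ih (q.append r) (by rw [len_append]; omega)
          linarith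

end NNC

section BF
variable {n K : ℕ} (J : Fin K → Set (Fin n)) (ρ : Fin K → Fin n → ℝ) (ustar : Fin K → Fin n → ℝ)

open Wk
open scoped Classical in
noncomputable def bf : ℕ → Fin n → ℝ
  | 0 => fun _ => 0
  | (m+1) => fun j =>
      (insert (bf m j) ((Finset.univ.filter
          (fun p : Fin K × Fin n => PA J ustar p.1 p.2 j)).image
          (fun p => bf m p.2 + (ρ p.1 p.2 - ρ p.1 j)))).min' (Finset.insert_nonempty _ _)

variable {J} {ustar}

lemma bf_zero (j : Fin n) : bf J ρ ustar 0 j = 0 := rfl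

open scoped Classical in
lemma bf_succ (m : ℕ) (j : Fin n) : bf J ρ ustar (m+1) j
    = (insert (bf J ρ ustar m j) ((Finset.univ.filter
          (fun p : Fin K × Fin n => PA J ustar p.1 p.2 j)).image
          (fun p => bf J ρ ustar m p.2 + (ρ p.1 p.2 - ρ p.1 j)))).min'
        (Finset.insert_nonempty _ _) := by
  rw [bf]

lemma bf_succ_le (m : ℕ) (j : Fin n) : bf J ρ ustar (m+1) j ≤ bf J ρ ustar m j := by
  classical
  rw [bf_succ]
  exact Finset.min'_le _ _ (Finset.mem_insert_self _ _)

lemma bf_succ_le_arc {k : Fin K} {i j : Fin n} (h : PA J ustar k i j) (m : ℕ) :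
    bf J ρ ustar (m+1) j ≤ bf J ρ ustar m i + (ρ k i - ρ k j) := by
  classical
  rw [bf_succ]
  refine Finset.min'_le _ _ (Finset.mem_insert_of_mem (Finset.mem_image.2 ⟨(k, i), ?_, rfl⟩))
  simp [h]

lemma bf_succ_cases (m : ℕ) (j : Fin n) : bf J ρ ustar (m+1) j = bf J ρ ustar m j ∨
    ∃ k i, PA J ustar k i j ∧ bf J ρ ustar (m+1) j = bf J ρ ustar m i + (ρ k i - ρ k j) := by
  classical
  have := Finset.min'_mem (insert (bf J ρ ustar m j) ((Finset.univ.filter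
        (fun p : Fin K × Fin n => PA J ustar p.1 p.2 j)).image
        (fun p => bf J ρ ustar m p.2 + (ρ p.1 p.2 - ρ p.1 j)))) (Finset.insert_nonempty _ _)
  rw [← bf_succ] at this
  rcases Finset.mem_insert.1 this with h | h
  · exact Or.inl h
  · obtain ⟨p, hp, hpe⟩ := Finset.mem_image.1 h
    exact Or.inr ⟨p.1, p.2, (Finset.mem_filter.1 hp).2, hpe.symm⟩

lemma weight_snoc {i j l : Fin n} (p : Wk J ustar i j) (k : Fin K) (h : PA J ustar k j l) :
    weight ρ (p.snoc k h) = weight ρ p + (ρ k j - ρ k l) := by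
  simp [weight]

lemma len_snoc {i j l : Fin n} (p : Wk J ustar i j) (k : Fin K) (h : PA J ustar k j l) :
    len (p.snoc k h) = len p + 1 := by
  simp [len]

lemma bf_nonpos (m : ℕ) (j : Fin n) : bf J ρ ustar m j ≤ 0 := by
  induction m with
  | zero => rw [bf_zero]
  | succ m ih => exact le_trans (bf_succ_le ρ m j) ih

lemma bf_attained : ∀ (m : ℕ) (j : Fin n),
    ∃ (i : Fin n) (p : Wk J ustar i j), len p ≤ m ∧ weight ρ p = bf J ρ ustar m j := by
  intro m
  induction m with
  | zero =>
      intro j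
      exact ⟨j, .nil j, by simp [len], by simp [weight, bf_zero]⟩
  | succ m ih =>
      intro j
      rcases bf_succ_cases ρ m j with h | ⟨k, i, hP, h⟩
      · obtain ⟨i, p, hl, hw⟩ := ih j
        exact ⟨i, p, by omega, by rw [hw, h]⟩
      · obtain ⟨i0, p, hl, hw⟩ := ih i
        exact ⟨i0, p.snoc k hP, by rw [len_snoc]; omega, by rw [weight_snoc, hw, h]⟩

lemma bf_le : ∀ (m : ℕ) {i j : Fin n} (p : Wk J ustar i j), len p ≤ m →
    bf J ρ ustar m j ≤ weight ρ p := by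
  intro m
  induction m with
  | zero =>
      intro i j p hp
      rw [weight_of_len_zero p (Nat.le_zero.1 hp), bf_zero]
  | succ m ih =>
      intro i j p hp
      cases p with
      | nil =>
          rw [weight_of_len_zero _ (by simp [len])]
          exact bf_nonpos ρ (m+1) _
      | snoc p' k h =>
          have hl : len p' ≤ m := by
            rw [len_snoc] at hp; omega
          calc bf J ρ ustar (m+1) _ ≤ bf J ρ ustar m _ + (ρ k _ - ρ k _) := bf_succ_le_arc ρ h m
            _ ≤ weight ρ p' + (ρ k _ - ρ k _) := by linarith [ih p' hl]
            _ = weight ρ (p'.snoc k h) := (weight_snoc ρ p' k h).symm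

lemma vlist_length {i j : Fin n} (p : Wk J ustar i j) : (vlist p).length = len p + 1 := by
  simp [vlist, ends, len]

lemma potential {R : Fin K → ℕ} {F : Fin K → Set (Fin n → ℝ)} {N : Fin n → ℝ}
    (hF : ∀ k, F k = {u : Fin n → ℝ |
      (∀ i, u i = 0 ∨ u i = 1) ∧ (∑ i, u i) = (R k : ℝ) ∧ ∀ i ∈ J k, u i = 0})
    (hu : ∀ k, ustar k ∈ F k) (hN : N = ∑ k, ustar k)
    (hopt : ∀ v : Fin K → Fin n → ℝ, (∀ k, v k ∈ F k) → (∑ k, v k) = N →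
      ∑ k, ∑ i, ρ k i * v k i ≤ ∑ k, ∑ i, ρ k i * ustar k i)
    {k : Fin K} {i j : Fin n} (h : PA J ustar k i j) :
    bf J ρ ustar n j ≤ bf J ρ ustar n i + (ρ k i - ρ k j) := by
  have h1 : bf J ρ ustar (n+1) j ≤ bf J ρ ustar n i + (ρ k i - ρ k j) := bf_succ_le_arc ρ h n
  have h2 : bf J ρ ustar n j ≤ bf J ρ ustar (n+1) j := by
    obtain ⟨i0, p, hl, hw⟩ := bf_attained ρ (n+1) j
    by_cases hle : len p ≤ n
    · rw [← hw]
      exact bf_le ρ n p hle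
    · have hnd : ¬ (vlist p).Nodup := by
        intro hnd
        have := hnd.length_le_card
        rw [vlist_length, Fintype.card_fin] at this
        omega
      obtain ⟨y, q, c, r, hsplit, hc⟩ := dup_split p hnd
      have hwc : 0 ≤ weight ρ c := nnc hF hu hN hopt (len c) c le_rfl
      have hweq : weight ρ p = weight ρ (q.append r) + weight ρ c := by
        rw [hsplit, weight_append, weight_append, weight_append]; ring
      have hleq : len p = len q + len c + len r := by
        rw [hsplit, len_append, len_append]; ring
      have hqr : bf J ρ ustar n j ≤ weight ρ (q.append r) :=
        bf_le ρ n (q.append r) (by rw [len_append]; omega)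
      linarith
  linarith

end BF

/-- Given an optimal decomposition `N = ∑ₖ uₖ*` (the `uₖ* ∈ Fₖ` maximize
`∑ₖ ⟨ρₖ,vₖ⟩` among decompositions of `N`), the set of price vectors `y` making
every `uₖ*` optimal over `Fₖ` is nonempty and equals the polyhedron
`{y : ∀ k, ∀ i,j ∉ Jₖ with uₖ*(i)=1, uₖ*(j)=0, ρₖ(i)+yᵢ ≥ ρₖ(j)+yⱼ}`. -/
theorem stmt_10 (n K : ℕ) (R : Fin K → ℕ) (hR : ∀ k, R k ≤ n)
    (J : Fin K → Set (Fin n)) (ρ : Fin K → Fin n → ℝ)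
    (F : Fin K → Set (Fin n → ℝ))
    (hF : ∀ k, F k = {u : Fin n → ℝ |
      (∀ i, u i = 0 ∨ u i = 1) ∧ (∑ i, u i) = (R k : ℝ) ∧ ∀ i ∈ J k, u i = 0})
    (ustar : Fin K → Fin n → ℝ) (hu : ∀ k, ustar k ∈ F k)
    (N : Fin n → ℝ) (hN : N = ∑ k, ustar k)
    (hopt : ∀ v : Fin K → Fin n → ℝ, (∀ k, v k ∈ F k) → (∑ k, v k) = N →
      ∑ k, ∑ i, ρ k i * v k i ≤ ∑ k, ∑ i, ρ k i * ustar k i) :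
    {y : Fin n → ℝ | ∀ k, ∀ v ∈ F k,
        ∑ i, (ρ k i + y i) * v i ≤ ∑ i, (ρ k i + y i) * ustar k i}.Nonempty
    ∧ {y : Fin n → ℝ | ∀ k, ∀ v ∈ F k,
        ∑ i, (ρ k i + y i) * v i ≤ ∑ i, (ρ k i + y i) * ustar k i}
      = {y : Fin n → ℝ | ∀ k, ∀ i j : Fin n, i ∉ J k → j ∉ J k →
          ustar k i = 1 → ustar k j = 0 → ρ k j + y j ≤ ρ k i + y i} := by
  classical
  -- opt set ⊆ polyhedron
  have hsub1 : {y : Fin n → ℝ | ∀ k, ∀ v ∈ F k,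
        ∑ i, (ρ k i + y i) * v i ≤ ∑ i, (ρ k i + y i) * ustar k i}
      ⊆ {y : Fin n → ℝ | ∀ k, ∀ i j : Fin n, i ∉ J k → j ∉ J k →
          ustar k i = 1 → ustar k j = 0 → ρ k j + y j ≤ ρ k i + y i} := by
    intro y hy
    simp only [Set.mem_setOf_eq] at hy ⊢
    intro k i j hiJ hjJ hui huj
    obtain ⟨hu01, husum, huJ⟩ : (∀ x, ustar k x = 0 ∨ ustar k x = 1) ∧
        (∑ x, ustar k x) = (R k : ℝ) ∧ ∀ x ∈ J k, ustar k x = 0 := by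
      have := hu k; rwa [hF k] at this
    have hij : i ≠ j := by
      intro h; rw [h, huj] at hui; norm_num at hui
    set w : Fin n → ℝ := fun x => ρ k x + y x with hwdef
    set v : Fin n → ℝ := Function.update (Function.update (ustar k) i 0) j 1 with hvdef
    have hvj : v j = 1 := by simp [hvdef, Function.update_apply]
    have hvi : v i = 0 := by simp [hvdef, Function.update_apply, hij]
    have hvx : ∀ x, x ≠ i → x ≠ j → v x = ustar k x := by
      intro x hxi hxj
      simp [hvdef, Function.update_apply, hxi, hxj]
    have hmemi : i ∈ Finset.univ \ ({j} : Finset (Fin n)) := by simp [hij]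
    have hvF : v ∈ F k := by
      rw [hF k]
      refine ⟨?_, ?_, ?_⟩
      · intro x
        by_cases hxj : x = j
        · subst hxj; rw [hvj]; right; rfl
        · by_cases hxi : x = i
          · subst hxi; rw [hvi]; left; rfl
          · rw [hvx x hxi hxj]; exact hu01 x
      · have hs1 : ∑ x, v x = 1 + ∑ x ∈ Finset.univ \ {j}, Function.update (ustar k) i 0 x := by
          rw [hvdef, Finset.sum_update_of_mem (Finset.mem_univ j)]
        have hs2 : ∑ x ∈ Finset.univ \ {j}, Function.update (ustar k) i 0 x
            = 0 + ∑ x ∈ (Finset.univ \ {j}) \ {i}, ustar k x :=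
          Finset.sum_update_of_mem hmemi _ _
        have hs3 : ∑ x, ustar k x = ∑ x ∈ Finset.univ \ {j}, ustar k x + ustar k j :=
          Finset.sum_eq_sum_sdiff_singleton_add (Finset.mem_univ j) _
        have hs4 : ∑ x ∈ Finset.univ \ {j}, ustar k x
            = ∑ x ∈ (Finset.univ \ {j}) \ {i}, ustar k x + ustar k i :=
          Finset.sum_eq_sum_sdiff_singleton_add hmemi _
        rw [hs1, hs2]
        rw [hs3, hs4, hui, huj] at husum
        linarith
      · intro x hx
        have hxi : x ≠ i := fun h => hiJ (h ▸ hx)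
        have hxj : x ≠ j := fun h => hjJ (h ▸ hx)
        rw [hvx x hxi hxj]
        exact huJ x hx
    have hineq := hy k v hvF
    have hw1 : ∑ x, w x * v x = ∑ x ∈ (Finset.univ \ {j}) \ {i}, w x * ustar k x + w j := by
      rw [Finset.sum_eq_sum_sdiff_singleton_add (Finset.mem_univ j) (fun x => w x * v x)]
      rw [Finset.sum_eq_sum_sdiff_singleton_add hmemi (fun x => w x * v x), hvj, hvi]
      have he : ∀ x ∈ (Finset.univ \ {j}) \ ({i} : Finset (Fin n)), w x * v x = w x * ustar k x := by
        intro x hx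
        simp only [Finset.mem_sdiff, Finset.mem_singleton] at hx
        rw [hvx x hx.2 hx.1.2]
      rw [Finset.sum_congr rfl he]
      ring
    have hw2 : ∑ x, w x * ustar k x = ∑ x ∈ (Finset.univ \ {j}) \ {i}, w x * ustar k x + w i := by
      rw [Finset.sum_eq_sum_sdiff_singleton_add (Finset.mem_univ j) (fun x => w x * ustar k x)]
      rw [Finset.sum_eq_sum_sdiff_singleton_add hmemi (fun x => w x * ustar k x), hui, huj]
      ring
    rw [hw1, hw2] at hineq
    have : w j ≤ w i := by linarith
    simpa [hwdef] using this
  -- polyhedron ⊆ opt set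
  have hsub2 : {y : Fin n → ℝ | ∀ k, ∀ i j : Fin n, i ∉ J k → j ∉ J k →
          ustar k i = 1 → ustar k j = 0 → ρ k j + y j ≤ ρ k i + y i}
      ⊆ {y : Fin n → ℝ | ∀ k, ∀ v ∈ F k,
        ∑ i, (ρ k i + y i) * v i ≤ ∑ i, (ρ k i + y i) * ustar k i} := by
    intro y hy
    simp only [Set.mem_setOf_eq] at hy ⊢
    intro k v hv
    obtain ⟨hu01, husum, huJ⟩ : (∀ x, ustar k x = 0 ∨ ustar k x = 1) ∧
        (∑ x, ustar k x) = (R k : ℝ) ∧ ∀ x ∈ J k, ustar k x = 0 := by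
      have := hu k; rwa [hF k] at this
    obtain ⟨hv01, hvsum, hvJ⟩ : (∀ x, v x = 0 ∨ v x = 1) ∧
        (∑ x, v x) = (R k : ℝ) ∧ ∀ x ∈ J k, v x = 0 := by
      rwa [hF k] at hv
    set w : Fin n → ℝ := fun x => ρ k x + y x with hwdef
    have hrepr : ∀ u : Fin n → ℝ, (∀ x, u x = 0 ∨ u x = 1) →
        (∑ x, w x * u x = ∑ x ∈ Finset.univ.filter (fun x => u x = 1), w x) ∧
        ((∑ x, u x) = ((Finset.univ.filter (fun x => u x = 1)).card : ℝ)) := by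
      intro u h01
      constructor
      · rw [← Finset.sum_filter_add_sum_filter_not Finset.univ (fun x => u x = 1)
            (fun x => w x * u x)]
        have e1 : ∑ x ∈ Finset.univ.filter (fun x => u x = 1), w x * u x
            = ∑ x ∈ Finset.univ.filter (fun x => u x = 1), w x :=
          Finset.sum_congr rfl fun x hx => by
            rw [(Finset.mem_filter.1 hx).2, mul_one]
        have e2 : ∑ x ∈ Finset.univ.filter (fun x => ¬ u x = 1), w x * u x = 0 :=
          Finset.sum_eq_zero fun x hx => by
            rcases h01 x with h | h
            · rw [h, mul_zero]
            · exact absurd h (Finset.mem_filter.1 hx).2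
        rw [e1, e2, add_zero]
      · rw [← Finset.sum_filter_add_sum_filter_not Finset.univ (fun x => u x = 1) u]
        have e1 : ∑ x ∈ Finset.univ.filter (fun x => u x = 1), u x
            = ((Finset.univ.filter (fun x => u x = 1)).card : ℝ) := by
          rw [Finset.sum_congr rfl (fun x hx => (Finset.mem_filter.1 hx).2)]
          simp
        have e2 : ∑ x ∈ Finset.univ.filter (fun x => ¬ u x = 1), u x = 0 :=
          Finset.sum_eq_zero fun x hx => by
            rcases h01 x with h | h
            · exact h
            · exact absurd h (Finset.mem_filter.1 hx).2
        rw [e1, e2, add_zero]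
    set A : Finset (Fin n) := Finset.univ.filter (fun x => ustar k x = 1) with hA
    set B : Finset (Fin n) := Finset.univ.filter (fun x => v x = 1) with hB
    obtain ⟨hru1, hru2⟩ := hrepr (ustar k) hu01
    obtain ⟨hrv1, hrv2⟩ := hrepr v hv01
    have hcard : B.card = A.card := by
      have : (B.card : ℝ) = (A.card : ℝ) := by
        rw [← hru2, ← hrv2, husum, hvsum]
      exact_mod_cast this
    have hdc : (B \ A).card = (A \ B).card := Finset.card_sdiff_comm hcard
    have hpair : ∀ j' ∈ B \ A, ∀ i' ∈ A \ B, w j' ≤ w i' := by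
      intro j' hj' i' hi'
      simp only [Finset.mem_sdiff, hA, hB, Finset.mem_filter, Finset.mem_univ, true_and] at hj' hi'
      have hj0 : ustar k j' = 0 := by
        rcases hu01 j' with h | h
        · exact h
        · exact absurd h hj'.2
      have hjJ : j' ∉ J k := by
        intro hmem
        rw [hvJ j' hmem] at hj'
        norm_num at hj'
      have hiJ : i' ∉ J k := by
        intro hmem
        rw [huJ i' hmem] at hi'
        norm_num at hi'
      exact hy k i' j' hiJ hjJ hi'.1 hj0
    have hBA : ∑ x ∈ B \ A, w x ≤ ∑ x ∈ A \ B, w x := by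
      have e := Finset.equivOfCardEq hdc
      calc ∑ x ∈ B \ A, w x = ∑ x : {x // x ∈ B \ A}, w x.1 :=
            (Finset.sum_coe_sort _ _).symm
        _ ≤ ∑ x : {x // x ∈ B \ A}, w (e x).1 :=
            Finset.sum_le_sum fun x _ => hpair x.1 x.2 (e x).1 (e x).2
        _ = ∑ x : {x // x ∈ A \ B}, w x.1 := Equiv.sum_comp e (fun x => w x.1)
        _ = ∑ x ∈ A \ B, w x := Finset.sum_coe_sort _ _
    have hBdec : ∑ x ∈ B ∩ A, w x + ∑ x ∈ B \ A, w x = ∑ x ∈ B, w x :=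
      Finset.sum_inter_add_sum_sdiff _ _ _
    have hAdec : ∑ x ∈ A ∩ B, w x + ∑ x ∈ A \ B, w x = ∑ x ∈ A, w x :=
      Finset.sum_inter_add_sum_sdiff _ _ _
    rw [Finset.inter_comm] at hBdec
    rw [hru1, hrv1]
    linarith
  have hEq : {y : Fin n → ℝ | ∀ k, ∀ v ∈ F k,
        ∑ i, (ρ k i + y i) * v i ≤ ∑ i, (ρ k i + y i) * ustar k i}
      = {y : Fin n → ℝ | ∀ k, ∀ i j : Fin n, i ∉ J k → j ∉ J k →
          ustar k i = 1 → ustar k j = 0 → ρ k j + y j ≤ ρ k i + y i} :=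
    Set.Subset.antisymm hsub1 hsub2
  refine ⟨⟨fun i => bf J ρ ustar n i, ?_⟩, hEq⟩
  rw [hEq]
  simp only [Set.mem_setOf_eq]
  intro k i j hiJ hjJ hui huj
  have := potential ρ hF hu hN hopt (k := k) (i := i) (j := j) ⟨hiJ, hjJ, hui, huj⟩
  linarith
end

section
/- Let u_k* ∈ F_k (k = 1,…,K) be an optimal decomposition of N = ∑_{k=1}^K u_k*, i.e. ∑_{k=1}^K ⟨ρ_k, u_k*⟩ ≥ ∑_{k=1}^K ⟨ρ_k, v_k⟩ for all v_k ∈ F_k with ∑_{k=1}^K v_k = N. Then the associated exchange graph has no negative cycle: for every r ≥ 1, every sequence of indices γ_0, γ_1, …, γ_r ∈ {1,…,n} with γ_r = γ_0, and every sequence l_0, …, l_{r−1} ∈ {1,…,K} such that for each u ∈ {0,…,r−1} one has u_{l_u}*(γ_u) = 1, u_{l_u}*(γ_{u+1}) = 0 and γ_{u+1} ∉ J_{l_u}, the total weight satisfies ∑_{u=0}^{r−1} (ρ_{l_u}(γ_u) − ρ_{l_u}(γ_{u+1})) ≥ 0. -/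
/-- Splitting a cycle at a repeated vertex: to prove nonnegativity of cycle
weights it suffices to prove it for cycles whose vertices are pairwise
distinct. -/
lemma cycle_split {α β : Type*} (w : β → α → α → ℝ) (Q : β → α → α → Prop)
    (base : ∀ (r : ℕ) (γ : ℕ → α) (l : ℕ → β), 1 ≤ r → γ r = γ 0 →
      (∀ u < r, Q (l u) (γ u) (γ (u + 1))) →
      (∀ a b, a < b → b < r → γ a ≠ γ b) →
      0 ≤ ∑ u ∈ Finset.range r, w (l u) (γ u) (γ (u + 1))) :
    ∀ (r : ℕ) (γ : ℕ → α) (l : ℕ → β), 1 ≤ r → γ r = γ 0 →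
      (∀ u < r, Q (l u) (γ u) (γ (u + 1))) →
      0 ≤ ∑ u ∈ Finset.range r, w (l u) (γ u) (γ (u + 1)) := by
  intro r
  induction r using Nat.strong_induction_on with
  | _ r IH =>
  intro γ l hr hcyc hedge
  by_cases hinj : ∀ a b, a < b → b < r → γ a ≠ γ b
  · exact base r γ l hr hcyc hedge hinj
  · push_neg at hinj
    obtain ⟨a, b, hab, hbr, heq⟩ := hinj
    set d := b - a with hd
    have had : a + d = b := Nat.add_sub_cancel' hab.le
    have hd1 : 1 ≤ d := by omega
    have hdr : d ≤ r := by omega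
    set r1 := d with hr1
    set r2 := r - d with hr2
    have har2 : a < r2 := by omega
    have hr2d : r2 + d = r := by omega
    set γ1 : ℕ → α := fun u => γ (a + u) with hγ1
    set l1 : ℕ → β := fun u => l (a + u) with hl1
    set γ2 : ℕ → α := fun u => if u < a then γ u else γ (u + d) with hγ2
    set l2 : ℕ → β := fun u => if u < a then l u else l (u + d) with hl2
    -- inner cycle
    have h1 : 0 ≤ ∑ u ∈ Finset.range r1, w (l1 u) (γ1 u) (γ1 (u + 1)) := by
      apply IH r1 (by omega) γ1 l1 hd1
      · simp only [hγ1, had]; exact heq.symm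
      · intro u hu
        have := hedge (a + u) (by omega)
        simpa [hγ1, hl1, Nat.add_assoc] using this
    -- outer cycle
    have hγ2a : ∀ u ≤ a, γ2 u = γ u := by
      intro u hu
      rcases lt_or_eq_of_le hu with h | h
      · simp [hγ2, h]
      · subst h; simp [hγ2, had, ← heq]
        exact (congrArg γ (by omega : _ = b)).trans heq.symm
    have hγ2b : ∀ u, a ≤ u → γ2 u = γ (u + d) := by
      intro u hu
      rcases lt_or_eq_of_le hu with h | h
      · simp [hγ2, Nat.not_lt.mpr (le_of_lt h)]
      · subst h; simp [hγ2, had, heq]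
    have h2 : 0 ≤ ∑ u ∈ Finset.range r2, w (l2 u) (γ2 u) (γ2 (u + 1)) := by
      apply IH r2 (by omega) γ2 l2 (by omega)
      · rw [hγ2b r2 (by omega), hγ2a 0 (by omega), hr2d, hcyc]
      · intro u hu
        by_cases hua : u < a
        · have := hedge u (by omega)
          rw [hγ2a u hua.le, hγ2a (u+1) hua]
          simpa [hl2, hua] using this
        · have := hedge (u + d) (by omega)
          rw [hγ2b u (by omega), hγ2b (u+1) (by omega)]
          simp only [hl2, if_neg hua]
          simpa [Nat.add_right_comm] using this
    -- sum decomposition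
    have hsum : ∑ u ∈ Finset.range r, w (l u) (γ u) (γ (u + 1))
        = (∑ u ∈ Finset.range r1, w (l1 u) (γ1 u) (γ1 (u + 1)))
          + ∑ u ∈ Finset.range r2, w (l2 u) (γ2 u) (γ2 (u + 1)) := by
      have e1 : ∑ u ∈ Finset.range r1, w (l1 u) (γ1 u) (γ1 (u + 1))
          = ∑ u ∈ Finset.Ico a b, w (l u) (γ u) (γ (u + 1)) := by
        rw [Finset.sum_Ico_eq_sum_range]
        apply Finset.sum_congr rfl
        intro u hu
        simp [hγ1, hl1, Nat.add_assoc]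
      have e2 : ∑ u ∈ Finset.range r2, w (l2 u) (γ2 u) (γ2 (u + 1))
          = (∑ u ∈ Finset.Ico 0 a, w (l u) (γ u) (γ (u + 1)))
            + ∑ u ∈ Finset.Ico b r, w (l u) (γ u) (γ (u + 1)) := by
        rw [Finset.range_eq_Ico, ← Finset.sum_Ico_consecutive _ (Nat.zero_le a) har2.le]
        congr 1
        · apply Finset.sum_congr rfl
          intro u hu
          simp only [Finset.mem_Ico] at hu
          rw [hγ2a u (by omega), hγ2a (u+1) (by omega)]
          simp [hl2, hu.2]
        · have : ∀ u ∈ Finset.Ico a r2, w (l2 u) (γ2 u) (γ2 (u + 1))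
              = w (l (u + d)) (γ (u + d)) (γ (u + d + 1)) := by
            intro u hu
            simp only [Finset.mem_Ico] at hu
            rw [hγ2b u hu.1, hγ2b (u+1) (by omega)]
            simp [hl2, Nat.not_lt.mpr hu.1, Nat.add_right_comm]
          rw [Finset.sum_congr rfl this, Finset.sum_Ico_eq_sum_range,
            Finset.sum_Ico_eq_sum_range]
          apply Finset.sum_congr (by rw [show r2 - a = r - b by omega])
          intro u hu
          congr 2 <;> omega
      rw [e1, e2, Finset.range_eq_Ico,
        ← Finset.sum_Ico_consecutive _ (Nat.zero_le b) hbr.le,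
        ← Finset.sum_Ico_consecutive _ (Nat.zero_le a) hab.le]
      ring
    rw [hsum]
    linarith

/-- Double sum of an indicator against coefficients. -/
lemma sum_sum_ite {n K : ℕ} (r : ℕ) (l : ℕ → Fin K) (g : ℕ → Fin n)
    (c : Fin K → Fin n → ℝ) :
    ∑ k, ∑ i, c k i * (∑ u ∈ Finset.range r, if l u = k ∧ g u = i then (1:ℝ) else 0)
      = ∑ u ∈ Finset.range r, c (l u) (g u) := by
  simp only [Finset.mul_sum, mul_ite, mul_one, mul_zero]
  rw [show (∑ k : Fin K, ∑ i : Fin n, ∑ u ∈ Finset.range r,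
      if l u = k ∧ g u = i then c k i else 0)
    = ∑ u ∈ Finset.range r, ∑ k : Fin K, ∑ i : Fin n,
      (if l u = k ∧ g u = i then c k i else 0) from ?_]
  · apply Finset.sum_congr rfl
    intro u _
    rw [show (∑ k : Fin K, ∑ i : Fin n, if l u = k ∧ g u = i then c k i else 0)
      = ∑ k : Fin K, if l u = k then c k (g u) else 0 from ?_]
    · simp [Finset.sum_ite_eq]
    · apply Finset.sum_congr rfl
      intro k _
      by_cases h : l u = k <;> simp [h, Finset.sum_ite_eq]
  · rw [show (∑ k : Fin K, ∑ i : Fin n, ∑ u ∈ Finset.range r,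
        if l u = k ∧ g u = i then c k i else 0)
      = ∑ k : Fin K, ∑ u ∈ Finset.range r, ∑ i : Fin n,
        (if l u = k ∧ g u = i then c k i else 0) from
      Finset.sum_congr rfl fun k _ => Finset.sum_comm]
    exact Finset.sum_comm

/-- If `(uₖ*)` is an optimal decomposition of `N = ∑ₖ uₖ*`, then the exchange
graph has no negative cycle: for every cycle `γ₀, …, γ_r = γ₀` with edge
labels `l₀, …, l_{r-1}` satisfying `u_{lᵤ}*(γᵤ) = 1`, `u_{lᵤ}*(γᵤ₊₁) = 0` and
`γᵤ₊₁ ∉ J_{lᵤ}`, the total weight `∑ᵤ (ρ_{lᵤ}(γᵤ) - ρ_{lᵤ}(γᵤ₊₁))` is ≥ 0. -/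
theorem stmt_14 (n K : ℕ) (R : Fin K → ℕ) (hR : ∀ k, R k ≤ n)
    (J : Fin K → Set (Fin n)) (ρ : Fin K → Fin n → ℝ)
    (F : Fin K → Set (Fin n → ℝ))
    (hF : ∀ k, F k = {u : Fin n → ℝ |
      (∀ i, u i = 0 ∨ u i = 1) ∧ (∑ i, u i) = (R k : ℝ) ∧ ∀ i ∈ J k, u i = 0})
    (ustar : Fin K → Fin n → ℝ) (hu : ∀ k, ustar k ∈ F k)
    (hopt : ∀ v : Fin K → Fin n → ℝ, (∀ k, v k ∈ F k) →
      (∑ k, v k) = (∑ k, ustar k) →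
      ∑ k, ∑ i, ρ k i * v k i ≤ ∑ k, ∑ i, ρ k i * ustar k i)
    (r : ℕ) (hr : 1 ≤ r) (γ : ℕ → Fin n) (hcycle : γ r = γ 0)
    (l : ℕ → Fin K)
    (hl : ∀ u < r, ustar (l u) (γ u) = 1 ∧ ustar (l u) (γ (u + 1)) = 0
      ∧ γ (u + 1) ∉ J (l u)) :
    0 ≤ ∑ u ∈ Finset.range r, (ρ (l u) (γ u) - ρ (l u) (γ (u + 1))) := by
  classical
  have h01 : ∀ k i, ustar k i = 0 ∨ ustar k i = 1 := fun k => by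
    have := hu k; rw [hF k] at this; exact this.1
  have hJ0 : ∀ k, ∀ i ∈ J k, ustar k i = 0 := fun k => by
    have := hu k; rw [hF k] at this; exact this.2.2
  have hRsum : ∀ k, (∑ i, ustar k i) = (R k : ℝ) := fun k => by
    have := hu k; rw [hF k] at this; exact this.2.1
  -- the base case: cycles with pairwise-distinct vertices
  have base : ∀ (r : ℕ) (γ : ℕ → Fin n) (l : ℕ → Fin K), 1 ≤ r → γ r = γ 0 →
      (∀ u < r, (fun (k : Fin K) (x y : Fin n) =>
          ustar k x = 1 ∧ ustar k y = 0 ∧ y ∉ J k) (l u) (γ u) (γ (u + 1))) →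
      (∀ a b, a < b → b < r → γ a ≠ γ b) →
      0 ≤ ∑ u ∈ Finset.range r,
        (fun (k : Fin K) (x y : Fin n) => ρ k x - ρ k y) (l u) (γ u) (γ (u + 1)) := by
    intro r γ l hr hcyc hedge hinj
    simp only at hedge ⊢
    -- injectivity helpers
    have hγu : ∀ u u', u < r → u' < r → γ u = γ u' → u = u' := by
      intro u u' hu hu' h
      rcases lt_trichotomy u u' with hlt | hEq | hgt
      · exact absurd h (hinj u u' hlt hu')
      · exact hEq
      · exact absurd h.symm (hinj u' u hgt hu)
    have hγs : ∀ u u', u < r → u' < r → γ (u + 1) = γ (u' + 1) → u = u' := by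
      intro u u' hu hu' h
      rcases Nat.lt_or_ge (u + 1) r with h1 | h1 <;>
        rcases Nat.lt_or_ge (u' + 1) r with h2 | h2
      · have := hγu _ _ h1 h2 h; omega
      · have hu'r : u' + 1 = r := by omega
        rw [hu'r, hcyc] at h
        have := hγu _ _ h1 (by omega) h; omega
      · have hur : u + 1 = r := by omega
        rw [hur, hcyc] at h
        have := hγu _ _ h2 (by omega) h.symm; omega
      · omega
    -- the exchange indicators
    set A : Fin K → Fin n → ℝ := fun k i =>
      ∑ u ∈ Finset.range r, if l u = k ∧ γ u = i then 1 else 0 with hA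
    set B : Fin K → Fin n → ℝ := fun k i =>
      ∑ u ∈ Finset.range r, if l u = k ∧ γ (u + 1) = i then 1 else 0 with hB
    set v : Fin K → Fin n → ℝ := fun k i => ustar k i - A k i + B k i with hv
    have hAex : ∀ k i, A k i ≠ 0 → ∃ u < r, l u = k ∧ γ u = i := by
      intro k i h
      by_contra hc
      push_neg at hc
      refine h (Finset.sum_eq_zero fun u hu => ?_)
      rw [Finset.mem_range] at hu
      exact if_neg fun hcon => (hc u hu hcon.1 hcon.2).elim
    have hBex : ∀ k i, B k i ≠ 0 → ∃ u < r, l u = k ∧ γ (u + 1) = i := by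
      intro k i h
      by_contra hc
      push_neg at hc
      refine h (Finset.sum_eq_zero fun u hu => ?_)
      rw [Finset.mem_range] at hu
      exact if_neg fun hcon => (hc u hu hcon.1 hcon.2).elim
    have hA01 : ∀ k i, A k i = 0 ∨ A k i = 1 := by
      intro k i
      by_cases h : A k i = 0
      · exact Or.inl h
      · obtain ⟨u0, hu0, hlu0, hγu0⟩ := hAex k i h
        right
        rw [hA]
        simp only
        rw [show (∑ u ∈ Finset.range r, if l u = k ∧ γ u = i then (1:ℝ) else 0)
          = ∑ u ∈ Finset.range r, if u = u0 then (1:ℝ) else 0 from ?_]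
        · simp [Finset.mem_range.mpr hu0]
        · apply Finset.sum_congr rfl
          intro u hu
          rw [Finset.mem_range] at hu
          congr 1
          simp only [eq_iff_iff]
          constructor
          · rintro ⟨h1, h2⟩
            exact hγu u u0 hu hu0 (h2.trans hγu0.symm)
          · rintro rfl
            exact ⟨hlu0, hγu0⟩
    have hB01 : ∀ k i, B k i = 0 ∨ B k i = 1 := by
      intro k i
      by_cases h : B k i = 0
      · exact Or.inl h
      · obtain ⟨u0, hu0, hlu0, hγu0⟩ := hBex k i h
        right
        rw [hB]
        simp only
        rw [show (∑ u ∈ Finset.range r, if l u = k ∧ γ (u + 1) = i then (1:ℝ) else 0)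
          = ∑ u ∈ Finset.range r, if u = u0 then (1:ℝ) else 0 from ?_]
        · simp [Finset.mem_range.mpr hu0]
        · apply Finset.sum_congr rfl
          intro u hu
          rw [Finset.mem_range] at hu
          congr 1
          simp only [eq_iff_iff]
          constructor
          · rintro ⟨h1, h2⟩
            exact hγs u u0 hu hu0 (h2.trans hγu0.symm)
          · rintro rfl
            exact ⟨hlu0, hγu0⟩
    have hA1 : ∀ k i, A k i ≠ 0 → ustar k i = 1 := by
      intro k i h
      obtain ⟨u, hu, rfl, rfl⟩ := hAex k i h
      exact (hedge u hu).1
    have hB1 : ∀ k i, B k i ≠ 0 → ustar k i = 0 ∧ i ∉ J k := by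
      intro k i h
      obtain ⟨u, hu, rfl, rfl⟩ := hBex k i h
      exact ⟨(hedge u hu).2.1, (hedge u hu).2.2⟩
    -- v takes values in {0,1}
    have hv01 : ∀ k i, v k i = 0 ∨ v k i = 1 := by
      intro k i
      rcases hA01 k i with hA0 | hA1' <;> rcases hB01 k i with hB0 | hB1'
      · rcases h01 k i with h | h
        · left; simp [hv, hA0, hB0, h]
        · right; simp [hv, hA0, hB0, h]
      · have := (hB1 k i (by rw [hB1']; norm_num)).1
        right; simp [hv, hA0, hB1', this]
      · have := hA1 k i (by rw [hA1']; norm_num)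
        left; simp [hv, hA1', hB0, this]
      · have h1 := hA1 k i (by rw [hA1']; norm_num)
        have h2 := (hB1 k i (by rw [hB1']; norm_num)).1
        rw [h1] at h2; norm_num at h2
    -- row sums of A and B agree
    have hrow : ∀ (g : ℕ → Fin n) (k : Fin K),
        (∑ i, ∑ u ∈ Finset.range r, if l u = k ∧ g u = i then (1:ℝ) else 0)
          = ∑ u ∈ Finset.range r, if l u = k then (1:ℝ) else 0 := by
      intro g k
      rw [Finset.sum_comm]
      apply Finset.sum_congr rfl
      intro u _
      by_cases h : l u = k <;> simp [h, Finset.sum_ite_eq]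
    have hrowAB : ∀ k, (∑ i, A k i) = ∑ i, B k i := by
      intro k
      rw [hA, hB]
      simp only
      rw [hrow γ k, hrow (fun u => γ (u + 1)) k]
    -- column sums of A and B agree (uses the cycle condition)
    have hcolA : ∀ i, (∑ k, A k i) = ∑ u ∈ Finset.range r, if γ u = i then (1:ℝ) else 0 := by
      intro i
      rw [hA]
      simp only
      rw [Finset.sum_comm]
      apply Finset.sum_congr rfl
      intro u _
      by_cases h : γ u = i <;> simp [h, Finset.sum_ite_eq]
    have hcolB : ∀ i, (∑ k, B k i)
        = ∑ u ∈ Finset.range r, if γ (u + 1) = i then (1:ℝ) else 0 := by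
      intro i
      rw [hB]
      simp only
      rw [Finset.sum_comm]
      apply Finset.sum_congr rfl
      intro u _
      by_cases h : γ (u + 1) = i <;> simp [h, Finset.sum_ite_eq]
    have hshift : ∀ i : Fin n,
        (∑ u ∈ Finset.range r, if γ (u + 1) = i then (1:ℝ) else 0)
          = ∑ u ∈ Finset.range r, if γ u = i then (1:ℝ) else 0 := by
      intro i
      have h1 := Finset.sum_range_succ' (fun u => if γ u = i then (1:ℝ) else 0) r
      have h2 := Finset.sum_range_succ (fun u => if γ u = i then (1:ℝ) else 0) r
      rw [hcyc] at h2
      linarith [h1, h2]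
    have hcol : ∀ i, (∑ k, A k i) = ∑ k, B k i := by
      intro i; rw [hcolA, hcolB, hshift]
    -- v is a feasible decomposition
    have hvF : ∀ k, v k ∈ F k := by
      intro k
      rw [hF k]
      refine ⟨hv01 k, ?_, ?_⟩
      · rw [show (∑ i, v k i) = (∑ i, ustar k i) - (∑ i, A k i) + ∑ i, B k i from ?_]
        · rw [hrowAB k, hRsum k]; ring
        · rw [Finset.sum_add_distrib, Finset.sum_sub_distrib]
      · intro i hi
        have hB0 : B k i = 0 := by
          by_contra h
          exact (hB1 k i h).2 hi
        have hA0 : A k i = 0 := by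
          by_contra h
          have := hA1 k i h
          rw [hJ0 k i hi] at this; norm_num at this
        simp [hv, hA0, hB0, hJ0 k i hi]
    have hvsum : (∑ k, v k) = ∑ k, ustar k := by
      funext i
      simp only [Finset.sum_apply]
      rw [show (∑ k, v k i) = (∑ k, ustar k i) - (∑ k, A k i) + ∑ k, B k i from ?_]
      · rw [hcol i]; ring
      · rw [Finset.sum_add_distrib, Finset.sum_sub_distrib]
    -- apply optimality
    have hineq := hopt v hvF hvsum
    have hexpand : (∑ k, ∑ i, ρ k i * v k i)
        = (∑ k, ∑ i, ρ k i * ustar k i)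
          - (∑ u ∈ Finset.range r, ρ (l u) (γ u))
          + ∑ u ∈ Finset.range r, ρ (l u) (γ (u + 1)) := by
      rw [← sum_sum_ite r l γ ρ, ← sum_sum_ite r l (fun u => γ (u + 1)) ρ]
      rw [show (∑ k, ∑ i, ρ k i * v k i)
        = ∑ k, ((∑ i, ρ k i * ustar k i) - (∑ i, ρ k i * A k i)
            + ∑ i, ρ k i * B k i) from ?_]
      · rw [Finset.sum_add_distrib, Finset.sum_sub_distrib, hA, hB]
      · apply Finset.sum_congr rfl
        intro k _
        rw [← Finset.sum_sub_distrib, ← Finset.sum_add_distrib]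
        apply Finset.sum_congr rfl
        intro i _
        simp [hv]; ring
    rw [hexpand] at hineq
    rw [Finset.sum_sub_distrib]
    linarith
  exact cycle_split (fun (k : Fin K) (x y : Fin n) => ρ k x - ρ k y)
    (fun (k : Fin K) (x y : Fin n) =>
      ustar k x = 1 ∧ ustar k y = 0 ∧ y ∉ J k) base r γ l hr hcycle hl
end
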